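/- arXiv:2202.12113 — 18 statements merged into one kernel-verified Lean document; each statement's English description precedes it below -/
import Mathlib

section
/- A functor F : C → D is separable if and only if F is semiseparable and faithful. -/
open CategoryTheory

universe v₁ v₂ v₃ u₁ u₂ u₃ u v

section Defs

variable {C : Type u₁} [Category.{v₁} C] {D : Type u₂} [Category.{v₂} D]

/-- `P` is a natural family of maps `Hom_D(F X, F Y) → Hom_C(X, Y)`. -/
def HomNatural (F : C ⥤ D) (P : ∀ X Y : C, (F.obj X ⟶ F.obj Y) → (X ⟶ Y)) : Prop :=
  ∀ ⦃X X' Y Y' : C⦄ (f : X' ⟶ X) (g : Y ⟶ Y') (h : F.obj X ⟶ F.obj Y),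
    P X' Y' (F.map f ≫ h ≫ F.map g) = f ≫ P X Y h ≫ g

/-- `F` is semiseparable: `F_* ∘ P ∘ F_* = F_*` for some natural `P`. -/
def SemiseparableFunctor (F : C ⥤ D) : Prop :=
  ∃ P : ∀ X Y : C, (F.obj X ⟶ F.obj Y) → (X ⟶ Y), HomNatural F P ∧
    ∀ ⦃X Y : C⦄ (f : X ⟶ Y), F.map (P X Y (F.map f)) = F.map f

/-- `F` is separable: `P ∘ F_* = id` for some natural `P`. -/
def SeparableFunctor (F : C ⥤ D) : Prop :=
  ∃ P : ∀ X Y : C, (F.obj X ⟶ F.obj Y) → (X ⟶ Y), HomNatural F P ∧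
    ∀ ⦃X Y : C⦄ (f : X ⟶ Y), P X Y (F.map f) = f

/-- `F` is naturally full: `F_* ∘ P = id` for some natural `P`. -/
def NaturallyFullFunctor (F : C ⥤ D) : Prop :=
  ∃ P : ∀ X Y : C, (F.obj X ⟶ F.obj Y) → (X ⟶ Y), HomNatural F P ∧
    ∀ ⦃X Y : C⦄ (h : F.obj X ⟶ F.obj Y), F.map (P X Y h) = h

end Defs

theorem stmt0 {C : Type u₁} [Category.{v₁} C] {D : Type u₂} [Category.{v₂} D] (F : C ⥤ D) :
    SeparableFunctor F ↔ SemiseparableFunctor F ∧ F.Faithful := by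
  constructor
  · rintro ⟨P, hP, hPF⟩
    refine ⟨⟨P, hP, fun X Y f => by rw [hPF]⟩, ⟨fun {X Y} f g h => ?_⟩⟩
    rw [← hPF f, ← hPF g, h]
  · rintro ⟨⟨P, hP, hPF⟩, hF⟩
    exact ⟨P, hP, fun X Y f => hF.map_injective (hPF f)⟩
end

section
/- A functor F : C → D is naturally full if and only if F is semiseparable and full. -/
open CategoryTheory

universe v₁ v₂ v₃ u₁ u₂ u₃ u v

theorem stmt1 {C : Type u₁} [Category.{v₁} C] {D : Type u₂} [Category.{v₂} D] (F : C ⥤ D) :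
    NaturallyFullFunctor F ↔ SemiseparableFunctor F ∧ F.Full := by
  constructor
  · rintro ⟨P, hnat, hP⟩
    refine ⟨⟨P, hnat, fun X Y f => by rw [hP]⟩, ⟨fun {X Y} h => ⟨P X Y h, hP h⟩⟩⟩
  · rintro ⟨⟨P, hnat, hP⟩, hfull⟩
    refine ⟨P, hnat, fun X Y h => ?_⟩
    conv_lhs => rw [← F.map_preimage h]
    rw [hP, F.map_preimage]
end

section
/- Let F : C → D be a semiseparable functor. Then there exists a unique idempotent natural transformation e : Id_C → Id_C with Fe = Id_F such that for all morphisms f, g : A → B, Ff = Fg if and only if e_B ∘ f = e_B ∘ g. -/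
open CategoryTheory

universe v₁ v₂ v₃ u₁ u₂ u₃ u v

theorem stmt2 {C : Type u₁} [Category.{v₁} C] {D : Type u₂} [Category.{v₂} D] (F : C ⥤ D)
    (hF : SemiseparableFunctor F) :
    ∃! e : 𝟭 C ⟶ 𝟭 C,
      (∀ X : C, e.app X ≫ e.app X = e.app X) ∧
      (∀ X : C, F.map (e.app X) = 𝟙 (F.obj X)) ∧
      ∀ ⦃A B : C⦄ (f g : A ⟶ B), F.map f = F.map g ↔ f ≫ e.app B = g ≫ e.app B := by
  obtain ⟨P, hP, hPF⟩ := hF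
  -- key computations
  have hleft : ∀ ⦃X Y : C⦄ (f : X ⟶ Y), f ≫ P Y Y (𝟙 _) = P X Y (F.map f) := by
    intro X Y f
    have := hP f (𝟙 Y) (𝟙 (F.obj Y))
    simpa using this.symm
  have hright : ∀ ⦃X Y : C⦄ (f : X ⟶ Y), P X X (𝟙 _) ≫ f = P X Y (F.map f) := by
    intro X Y f
    have := hP (𝟙 X) f (𝟙 (F.obj X))
    simpa using this.symm
  have hFe : ∀ X : C, F.map (P X X (𝟙 _)) = 𝟙 (F.obj X) := by
    intro X
    have := hPF (𝟙 X)
    simpa using this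
  refine ⟨⟨fun X => P X X (𝟙 _), ?_⟩, ⟨?_, ?_, ?_⟩, ?_⟩
  · intro X Y f
    simp only [Functor.id_map]
    rw [hleft f, ← hright f]
  · intro X
    have h1 := hleft (P X X (𝟙 (F.obj X)))
    rw [h1, hFe X]
  · exact hFe
  · intro A B f g
    constructor
    · intro h
      show f ≫ P B B (𝟙 _) = g ≫ P B B (𝟙 _)
      rw [hleft f, hleft g, h]
    · intro h
      have := congrArg F.map h
      simpa [hFe B] using this
  · intro e' ⟨hidem, hFe', hiff⟩
    ext X
    show e'.app X = P X X (𝟙 _)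
    -- from e's iff-like fact: F.map e' = 𝟙 = F.map (P 𝟙), so e' ≫ e = e ≫ e = e
    have h1 : e'.app X ≫ P X X (𝟙 _) = P X X (𝟙 _) := by
      have := hleft (e'.app X)
      rw [hFe' X] at this
      exact this
    -- from e''s iff: F.map e = 𝟙 = F.map e' ⇒ e ≫ e' = e' ≫ e' = e'
    have h2 : P X X (𝟙 _) ≫ e'.app X = e'.app X := by
      have hm : F.map (P X X (𝟙 (F.obj X))) = F.map (e'.app X) := by
        rw [hFe X, hFe' X]
      have := (hiff _ _).mp hm
      rw [this, hidem X]
    -- naturality of e' at e: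
    have hnat := e'.naturality (P X X (𝟙 (F.obj X)))
    simp only [Functor.id_map] at hnat
    calc e'.app X = P X X (𝟙 _) ≫ e'.app X := h2.symm
      _ = e'.app X ≫ P X X (𝟙 _) := hnat
      _ = P X X (𝟙 _) := h1
end

section
/- Let F : C → D be a semiseparable functor and e : Id_C → Id_C its associated idempotent natural transformation. Then F is separable if and only if e = Id. -/
open CategoryTheory

universe v₁ v₂ v₃ u₁ u₂ u₃ u v

theorem stmt3 {C : Type u₁} [Category.{v₁} C] {D : Type u₂} [Category.{v₂} D] (F : C ⥤ D)
    (hF : SemiseparableFunctor F) (e : 𝟭 C ⟶ 𝟭 C)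
    (he_idem : ∀ X : C, e.app X ≫ e.app X = e.app X)
    (hFe : ∀ X : C, F.map (e.app X) = 𝟙 (F.obj X))
    (huniv : ∀ ⦃A B : C⦄ (f g : A ⟶ B), F.map f = F.map g ↔ f ≫ e.app B = g ≫ e.app B) :
    SeparableFunctor F ↔ e = 𝟙 (𝟭 C) := by
  constructor
  · rintro ⟨P, hnat, hsep⟩
    ext X
    have h1 : P X X (F.map (e.app X)) = e.app X := hsep _
    have h2 : P X X (𝟙 (F.obj X)) = 𝟙 X := by simpa using hsep (𝟙 X)
    rw [hFe X, h2] at h1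
    simpa using h1.symm
  · rintro rfl
    obtain ⟨P, hnat, hsemi⟩ := hF
    refine ⟨P, hnat, fun X Y f => ?_⟩
    have := (huniv (P X Y (F.map f)) f).mp (hsemi f)
    simpa using this
end

section
/- A functor F : C → D is separable if and only if it is semiseparable and conservative. -/
open CategoryTheory

universe v₁ v₂ v₃ u₁ u₂ u₃ u v

theorem stmt4 {C : Type u₁} [Category.{v₁} C] {D : Type u₂} [Category.{v₂} D] (F : C ⥤ D) :
    SeparableFunctor F ↔ SemiseparableFunctor F ∧ F.ReflectsIsomorphisms := by
  constructor
  · rintro ⟨P, hnat, hsec⟩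
    refine ⟨⟨P, hnat, fun X Y f => by rw [hsec]⟩, ⟨fun {X Y} f hf => ?_⟩⟩
    refine ⟨⟨P Y X (inv (F.map f)), ?_, ?_⟩⟩
    · have h1 := hnat f (𝟙 X) (inv (F.map f))
      simp only [F.map_id, Category.comp_id, Category.id_comp] at h1 ⊢
      rw [← h1, IsIso.hom_inv_id, ← F.map_id, hsec]
    · have h2 := hnat (𝟙 Y) f (inv (F.map f))
      simp only [F.map_id, Category.id_comp] at h2 ⊢
      rw [← h2, IsIso.inv_hom_id, ← F.map_id, hsec]
  · rintro ⟨⟨P, hnat, hsemi⟩, hrefl⟩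
    -- e Y := P Y Y (𝟙 (F.obj Y)) is iso since F.map (e Y) = 𝟙
    have hFe : ∀ Y : C, F.map (P Y Y (𝟙 (F.obj Y))) = 𝟙 (F.obj Y) := by
      intro Y
      have := hsemi (𝟙 Y)
      simpa using this
    have hiso : ∀ Y : C, IsIso (P Y Y (𝟙 (F.obj Y))) := by
      intro Y
      have : IsIso (F.map (P Y Y (𝟙 (F.obj Y)))) := by rw [hFe]; infer_instance
      exact isIso_of_reflects_iso _ F
    -- commutation: for g : Y ⟶ Y', P Y Y 𝟙 ≫ g = g ≫ P Y' Y' 𝟙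
    have hcomm : ∀ ⦃Y Y' : C⦄ (g : Y ⟶ Y'),
        P Y Y (𝟙 (F.obj Y)) ≫ g = g ≫ P Y' Y' (𝟙 (F.obj Y')) := by
      intro Y Y' g
      have h1 := hnat (𝟙 Y) g (𝟙 (F.obj Y))
      have h2 := hnat g (𝟙 Y') (𝟙 (F.obj Y'))
      simp only [F.map_id, Category.id_comp, Category.comp_id] at h1 h2
      rw [← h1, ← h2]
    refine ⟨fun X Y h => P X Y h ≫ inv (P Y Y (𝟙 (F.obj Y))), ?_, ?_⟩
    · intro X X' Y Y' f g h
      have hY := hiso Y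
      have hY' := hiso Y'
      dsimp only
      rw [hnat f g h]
      have hg : g ≫ inv (P Y' Y' (𝟙 (F.obj Y'))) = inv (P Y Y (𝟙 (F.obj Y))) ≫ g := by
        rw [IsIso.eq_inv_comp, ← Category.assoc, hcomm g, Category.assoc,
          IsIso.hom_inv_id, Category.comp_id]
      simp only [Category.assoc, hg]
    · intro X Y f
      have := hiso Y
      have h1 := hnat (𝟙 X) (𝟙 Y) (F.map f)
      -- P (F f) = f ≫ P Y Y 𝟙 ? use naturality with f on right:
      have h2 := hnat f (𝟙 Y) (𝟙 (F.obj Y))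
      simp only [F.map_id, Category.id_comp, Category.comp_id] at h2
      dsimp only
      rw [h2]
      simp
end

section
/- A functor F : C → D is separable if and only if it is semiseparable and reflects split monomorphisms (i.e., is a Maschke functor). -/
open CategoryTheory

universe v₁ v₂ v₃ u₁ u₂ u₃ u v

theorem stmt5 {C : Type u₁} [Category.{v₁} C] {D : Type u₂} [Category.{v₂} D] (F : C ⥤ D) :
    SeparableFunctor F ↔ SemiseparableFunctor F ∧
      ∀ ⦃A B : C⦄ (i : A ⟶ B), IsSplitMono (F.map i) → IsSplitMono i := by
  constructor
  · rintro ⟨P, hnat, hsep⟩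
    refine ⟨⟨P, hnat, fun X Y f => by rw [hsep]⟩, fun A B i hi => ?_⟩
    refine ⟨⟨⟨P B A (retraction (F.map i)), ?_⟩⟩⟩
    have := hnat i (𝟙 A) (retraction (F.map i))
    simp only [Category.comp_id, F.map_id] at this
    rw [← this, IsSplitMono.id]
    have h1 := hsep (𝟙 A)
    rw [F.map_id] at h1
    exact h1
  · rintro ⟨⟨P, hnat, hss⟩, hrefl⟩
    -- e X := P X X (𝟙 (F.obj X))
    set e : ∀ X : C, X ⟶ X := fun X => P X X (𝟙 (F.obj X)) with he
    have hPf : ∀ ⦃X Y : C⦄ (f : X ⟶ Y), P X Y (F.map f) = e X ≫ f := by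
      intro X Y f
      have := hnat (𝟙 X) f (𝟙 (F.obj X))
      simpa using this
    have hFe : ∀ X : C, F.map (e X) = 𝟙 (F.obj X) := by
      intro X
      have := hss (𝟙 X)
      rw [F.map_id] at this
      exact this
    have hidem : ∀ X : C, e X ≫ e X = e X := by
      intro X
      have := hnat (e X) (𝟙 X) (𝟙 (F.obj X))
      rw [hFe, Category.comp_id, F.map_id, Category.comp_id, Category.comp_id] at this
      exact this.symm
    have heid : ∀ X : C, e X = 𝟙 X := by
      intro X
      have hsm : IsSplitMono (F.map (e X)) := by
        rw [hFe]; infer_instance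
      have := hrefl (e X) hsm
      have hr : e X ≫ retraction (e X) = 𝟙 X := IsSplitMono.id (e X)
      calc e X = e X ≫ e X ≫ retraction (e X) := by rw [hr, Category.comp_id]
        _ = (e X ≫ e X) ≫ retraction (e X) := by rw [Category.assoc]
        _ = 𝟙 X := by rw [hidem, hr]
    exact ⟨P, hnat, fun X Y f => by rw [hPf, heid, Category.id_comp]⟩
end

section
/- If F : C → D is semiseparable and G : D → E is separable, then the composite G ∘ F is semiseparable. -/
open CategoryTheory

universe v₁ v₂ v₃ u₁ u₂ u₃ u v

theorem stmt6 {C : Type u₁} [Category.{v₁} C] {D : Type u₂} [Category.{v₂} D]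
    {E : Type u₃} [Category.{v₃} E] (F : C ⥤ D) (G : D ⥤ E)
    (hF : SemiseparableFunctor F) (hG : SeparableFunctor G) :
    SemiseparableFunctor (F ⋙ G) := by
  obtain ⟨PF, hPFnat, hPF⟩ := hF
  obtain ⟨PG, hPGnat, hPG⟩ := hG
  refine ⟨fun X Y h => PF X Y (PG (F.obj X) (F.obj Y) h), ?_, ?_⟩
  · intro X X' Y Y' f g h
    have := hPGnat (F.map f) (F.map g) h
    simp only [Functor.comp_map]
    rw [this, hPFnat]
  · intro X Y f
    simp only [Functor.comp_map, hPG]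
    rw [hPF]
end

section
/- If F : C → D is naturally full and G : D → E is semiseparable, then the composite G ∘ F is semiseparable. -/
open CategoryTheory

universe v₁ v₂ v₃ u₁ u₂ u₃ u v

theorem stmt7 {C : Type u₁} [Category.{v₁} C] {D : Type u₂} [Category.{v₂} D]
    {E : Type u₃} [Category.{v₃} E] (F : C ⥤ D) (G : D ⥤ E)
    (hF : NaturallyFullFunctor F) (hG : SemiseparableFunctor G) :
    SemiseparableFunctor (F ⋙ G) := by
  obtain ⟨PF, hPFnat, hPF⟩ := hF
  obtain ⟨PG, hPGnat, hPG⟩ := hG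
  refine ⟨fun X Y h => PF X Y (PG (F.obj X) (F.obj Y) h), ?_, ?_⟩
  · intro X X' Y Y' f g h
    have := hPGnat (F.map f) (F.map g) h
    simp only [Functor.comp_map]
    rw [this, hPFnat]
  · intro X Y f
    simp only [Functor.comp_map]
    rw [hPF, hPG]
end

section
/- Let H : C → E be a semiseparable functor with associated idempotent natural transformation e, and suppose H is a retract of a functor F : C → D (i.e., there exist natural transformations φ : F → H and ψ : H → F with φ ∘ ψ = Id_H). If Fe = Id_F, then F is semiseparable. In particular, any functor naturally isomorphic to a semiseparable functor is semiseparable. -/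
open CategoryTheory

universe v₁ v₂ v₃ u₁ u₂ u₃ u v

lemma retract_semisep {C : Type u₁} [Category.{v₁} C] {D : Type u₂} [Category.{v₂} D]
    (H F : C ⥤ D) (hH : SemiseparableFunctor H) (e : 𝟭 C ⟶ 𝟭 C)
    (huniv : ∀ ⦃A B : C⦄ (f g : A ⟶ B), H.map f = H.map g ↔ f ≫ e.app B = g ≫ e.app B)
    (φ : F ⟶ H) (ψ : H ⟶ F) (hret : ψ ≫ φ = 𝟙 H)
    (hFe : ∀ X : C, F.map (e.app X) = 𝟙 (F.obj X)) :
    SemiseparableFunctor F := by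
  obtain ⟨P, hPnat, hPsemi⟩ := hH
  refine ⟨fun X Y h => P X Y (ψ.app X ≫ h ≫ φ.app Y), ?_, ?_⟩
  · intro X X' Y Y' f g h
    have : ψ.app X' ≫ (F.map f ≫ h ≫ F.map g) ≫ φ.app Y' =
        H.map f ≫ (ψ.app X ≫ h ≫ φ.app Y) ≫ H.map g := by
      simp only [Category.assoc, ← ψ.naturality_assoc, NatTrans.naturality]
    dsimp only
    rw [this, hPnat]
  · intro X Y f
    have hretX : ψ.app X ≫ φ.app X = 𝟙 (H.obj X) := congrArg (fun t => t.app X) hret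
    have h1 : ψ.app X ≫ F.map f ≫ φ.app Y = H.map f := by
      rw [φ.naturality f, reassoc_of% hretX]
    dsimp only
    rw [h1]
    have h2 : H.map (P X Y (H.map f)) = H.map f := hPsemi f
    have h3 : P X Y (H.map f) ≫ e.app Y = f ≫ e.app Y := (huniv _ _).mp h2
    calc F.map (P X Y (H.map f)) = F.map (P X Y (H.map f)) ≫ F.map (e.app Y) := by
          rw [hFe]; simp
      _ = F.map f := by rw [← F.map_comp, h3, F.map_comp, hFe]; simp

theorem stmt9 {C : Type u₁} [Category.{v₁} C] {D : Type u₂} [Category.{v₂} D]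
    (H F : C ⥤ D) (hH : SemiseparableFunctor H) (e : 𝟭 C ⟶ 𝟭 C)
    (he_idem : ∀ X : C, e.app X ≫ e.app X = e.app X)
    (hHe : ∀ X : C, H.map (e.app X) = 𝟙 (H.obj X))
    (huniv : ∀ ⦃A B : C⦄ (f g : A ⟶ B), H.map f = H.map g ↔ f ≫ e.app B = g ≫ e.app B)
    (φ : F ⟶ H) (ψ : H ⟶ F) (hret : ψ ≫ φ = 𝟙 H)
    (hFe : ∀ X : C, F.map (e.app X) = 𝟙 (F.obj X)) :
    SemiseparableFunctor F ∧
      ∀ F' : C ⥤ D, (F' ≅ H) → SemiseparableFunctor F' := by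
  refine ⟨retract_semisep H F hH e huniv φ ψ hret hFe, fun F' i => ?_⟩
  have hF'e : ∀ X : C, F'.map (e.app X) = 𝟙 (F'.obj X) := by
    intro X
    have := i.hom.naturality (e.app X)
    have h2 : F'.map (e.app X) ≫ i.hom.app X = i.hom.app X := by
      simpa [hHe] using this
    calc F'.map (e.app X) = (F'.map (e.app X) ≫ i.hom.app X) ≫ i.inv.app X := by simp
      _ = 𝟙 _ := by rw [h2]; simp
  exact retract_semisep H F' hH e huniv i.hom i.inv i.inv_hom_id hF'e
end

section
/- A functor is semiseparable if and only if it factors as S ∘ N where N is a naturally full functor and S is a separable functor. -/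
open CategoryTheory

universe v₁ v₂ v₃ u₁ u₂ u₃ u v

section Aux

variable {C : Type u₁} [Category.{v₁} C] {D : Type u₂} [Category.{v₂} D]

/-- Wrapper type for the intermediate category. -/
structure AuxE (F : C ⥤ D) (P : ∀ X Y : C, (F.obj X ⟶ F.obj Y) → (X ⟶ Y)) : Type u₁ where
  as : C

variable (F : C ⥤ D) (P : ∀ X Y : C, (F.obj X ⟶ F.obj Y) → (X ⟶ Y))

/-- The idempotent `Q = P ∘ F_*`. -/
def Qm {X Y : C} (f : X ⟶ Y) : X ⟶ Y := P X Y (F.map f)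

theorem Qm_Qm (hss : ∀ ⦃X Y : C⦄ (f : X ⟶ Y), F.map (P X Y (F.map f)) = F.map f)
    {X Y : C} (f : X ⟶ Y) : Qm F P (Qm F P f) = Qm F P f :=
  congrArg (P X Y) (hss f)

theorem Qm_comp_left (hnat : HomNatural F P) {X Y Z : C} (f : X ⟶ Y) (g : Y ⟶ Z) :
    Qm F P (f ≫ g) = Qm F P f ≫ g := by
  have := hnat (𝟙 X) g (F.map f)
  simpa [Qm] using this

theorem Qm_comp_right (hnat : HomNatural F P) {X Y Z : C} (f : X ⟶ Y) (g : Y ⟶ Z) :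
    Qm F P (f ≫ g) = f ≫ Qm F P g := by
  have := hnat f (𝟙 Z) (F.map g)
  simpa [Qm] using this

variable (hnat : HomNatural F P)
  (hss : ∀ ⦃X Y : C⦄ (f : X ⟶ Y), F.map (P X Y (F.map f)) = F.map f)

/-- The intermediate category: fixed points of `Q`. -/
def auxCategory : Category.{v₁, u₁} (AuxE F P) where
  Hom X Y := { f : X.as ⟶ Y.as // Qm F P f = f }
  id X := ⟨Qm F P (𝟙 X.as), Qm_Qm F P hss _⟩
  comp f g := ⟨f.1 ≫ g.1, by rw [Qm_comp_right F P hnat, g.2]⟩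
  id_comp f := by
    apply Subtype.ext
    show Qm F P (𝟙 _) ≫ f.1 = f.1
    rw [← Qm_comp_left F P hnat, Category.id_comp, f.2]
  comp_id f := by
    apply Subtype.ext
    show f.1 ≫ Qm F P (𝟙 _) = f.1
    rw [← Qm_comp_right F P hnat, Category.comp_id, f.2]
  assoc f g h := Subtype.ext (Category.assoc f.1 g.1 h.1)

/-- The intermediate category bundled. -/
def auxCat : Cat.{v₁, u₁} := @Cat.of (AuxE F P) (auxCategory F P hnat hss)

/-- The naturally full part. -/
def auxN : C ⥤ (auxCat F P hnat hss) where
  obj X := ⟨X⟩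
  map f := ⟨Qm F P f, Qm_Qm F P hss f⟩
  map_id X := rfl
  map_comp {X Y Z} f g := by
    apply Subtype.ext
    show Qm F P (f ≫ g) = Qm F P f ≫ Qm F P g
    rw [Qm_comp_left F P hnat, ← Qm_comp_right F P hnat, Qm_comp_left F P hnat,
      Qm_Qm F P hss]

/-- The separable part. -/
def auxS : (auxCat F P hnat hss) ⥤ D where
  obj X := F.obj X.as
  map f := F.map f.1
  map_id X := by
    show F.map (Qm F P (𝟙 _)) = _
    rw [Qm, hss, F.map_id]
  map_comp f g := by
    show F.map (f.1 ≫ g.1) = _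
    rw [F.map_comp]

end Aux

theorem stmt11 {C : Type u₁} [Category.{v₁} C] {D : Type u₂} [Category.{v₂} D] (F : C ⥤ D) :
    SemiseparableFunctor F ↔
      ∃ (E : Cat.{v₁, u₁}) (N : C ⥤ E) (S : E ⥤ D),
        NaturallyFullFunctor N ∧ SeparableFunctor S ∧ N ⋙ S = F := by
  constructor
  · rintro ⟨P, hnat, hss⟩
    refine ⟨auxCat F P hnat hss, auxN F P hnat hss, auxS F P hnat hss, ?_, ?_, ?_⟩
    · -- N is naturally full
      refine ⟨fun X Y h => h.1, ?_, fun X Y h => Subtype.ext h.2⟩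
      intro X X' Y Y' f g h
      show Qm F P f ≫ h.1 ≫ Qm F P g = f ≫ h.1 ≫ g
      have key : ∀ (k : X ⟶ Y), Qm F P k = k → Qm F P f ≫ k ≫ Qm F P g = f ≫ k ≫ g := by
        intro k hk
        rw [← Qm_comp_right F P hnat k g, Qm_comp_left F P hnat, hk,
          ← Qm_comp_left F P hnat f (k ≫ g), Qm_comp_right F P hnat,
          Qm_comp_left F P hnat, hk]
      exact key h.1 h.2
    · -- S is separable
      refine ⟨fun X Y h => ⟨Qm F P (P X.as Y.as h), Qm_Qm F P hss _⟩, ?_, ?_⟩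
      · intro X X' Y Y' f g h
        apply Subtype.ext
        show Qm F P (P _ _ (F.map f.1 ≫ h ≫ F.map g.1)) = f.1 ≫ Qm F P (P _ _ h) ≫ g.1
        have key : ∀ (a b c d : C) (f : b ⟶ a) (g : c ⟶ d) (h : F.obj a ⟶ F.obj c),
            Qm F P (P b d (F.map f ≫ h ≫ F.map g)) = f ≫ Qm F P (P a c h) ≫ g := by
          intro a b c d f g h
          rw [hnat, Qm_comp_right F P hnat, Qm_comp_left F P hnat]
        exact key _ _ _ _ f.1 g.1 h
      · intro X Y f
        apply Subtype.ext
        show Qm F P (P _ _ (F.map f.1)) = f.1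
        rw [show P X.as Y.as (F.map f.1) = Qm F P f.1 from rfl, Qm_Qm F P hss, f.2]
    · -- N ⋙ S = F
      refine CategoryTheory.Functor.ext (fun X => rfl) ?_
      intro X Y f
      show F.map (Qm F P f) = 𝟙 _ ≫ F.map f ≫ 𝟙 _
      rw [Qm, hss, Category.comp_id, Category.id_comp]
  · rintro ⟨E, N, S, ⟨PN, hPNnat, hPN⟩, ⟨PS, hPSnat, hPS⟩, rfl⟩
    refine ⟨fun X Y h => PN X Y (PS (N.obj X) (N.obj Y) h), ?_, ?_⟩
    · intro X X' Y Y' f g h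
      show PN X' Y' (PS _ _ (S.map (N.map f) ≫ h ≫ S.map (N.map g))) = _
      rw [hPSnat, hPNnat]
    · intro X Y f
      show S.map (N.map (PN X Y (PS _ _ (S.map (N.map f))))) = _
      rw [hPN, hPS]
      rfl
end

section
/- If C is a constant-generated category, then the only natural transformation Id_C → Id_C is the identity; consequently, any functor F : C → D is semiseparable if and only if it is separable. -/
open CategoryTheory

universe v₁ v₂ v₃ u₁ u₂ u₃ u v

/-- A morphism `k : G ⟶ X` is constant if any two morphisms into `G` are equalized by `k`. -/
def IsConstantMorphism {C : Type u₁} [Category.{v₁} C] {G X : C} (k : G ⟶ X) : Prop :=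
  ∀ ⦃Z : C⦄ (a b : Z ⟶ G), a ≫ k = b ≫ k

/-- `C` is constant-generated. -/
def ConstantGenerated (C : Type u₁) [Category.{v₁} C] : Prop :=
  ∀ ⦃X Y : C⦄ (f g : X ⟶ Y), f ≠ g →
    ∃ (G : C) (k : G ⟶ X), IsConstantMorphism k ∧ k ≫ f ≠ k ≫ g

theorem stmt12 {C : Type u₁} [Category.{v₁} C] {D : Type u₂} [Category.{v₂} D]
    (hC : ConstantGenerated C) :
    (∀ e : 𝟭 C ⟶ 𝟭 C, e = 𝟙 (𝟭 C)) ∧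
    ∀ F : C ⥤ D, (SemiseparableFunctor F ↔ SeparableFunctor F) := by
  have hid : ∀ e : 𝟭 C ⟶ 𝟭 C, e = 𝟙 (𝟭 C) := by
    intro e
    ext X
    by_contra h
    obtain ⟨G, k, hk, hne⟩ := hC (e.app X) (𝟙 X) (by simpa using h)
    apply hne
    have h1 : k ≫ e.app X = e.app G ≫ k := by
      simpa using e.naturality k
    have h2 : e.app G ≫ k = 𝟙 G ≫ k := hk _ _
    simp [h1, h2]
  refine ⟨hid, fun F => ⟨?_, ?_⟩⟩
  · rintro ⟨P, hnat, -⟩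
    refine ⟨P, hnat, fun X Y f => ?_⟩
    have key1 : ∀ ⦃X Y : C⦄ (u : X ⟶ Y), P X Y (F.map u) = u ≫ P Y Y (𝟙 _) := by
      intro X Y u
      have := hnat u (𝟙 Y) (𝟙 (F.obj Y))
      simpa using this
    have key2 : ∀ ⦃X Y : C⦄ (u : X ⟶ Y), P X Y (F.map u) = P X X (𝟙 _) ≫ u := by
      intro X Y u
      have := hnat (𝟙 X) u (𝟙 (F.obj X))
      simpa using this
    let e : 𝟭 C ⟶ 𝟭 C :=
      { app := fun X => P X X (𝟙 _)
        naturality := fun X Y u => by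
          have := (key1 u).symm.trans (key2 u)
          simpa using this }
    have he : P Y Y (𝟙 _) = 𝟙 Y := by
      have := congrArg (fun t => t.app Y) (hid e)
      simpa [e] using this
    rw [key1 f, he, Category.comp_id]
  · rintro ⟨P, hnat, hP⟩
    exact ⟨P, hnat, fun X Y f => by rw [hP]⟩
end

section
/- Let (F ⊣ G) be an adjunction with unit η : Id_C → GF and counit ε : FG → Id_D. Then F is semiseparable if and only if there exists a natural transformation ν : GF → Id_C with η ∘ ν ∘ η = η; and G is semiseparable if and only if there exists a natural transformation γ : Id_D → FG with ε ∘ γ ∘ ε = ε. -/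
open CategoryTheory

universe v₁ v₂ v₃ u₁ u₂ u₃ u v

theorem stmt13 {C : Type u₁} [Category.{v₁} C] {D : Type u₂} [Category.{v₂} D]
    {F : C ⥤ D} {G : D ⥤ C} (adj : F ⊣ G) :
    (SemiseparableFunctor F ↔ ∃ ν : F ⋙ G ⟶ 𝟭 C,
        ∀ X : C, adj.unit.app X ≫ ν.app X ≫ adj.unit.app X = adj.unit.app X) ∧
    (SemiseparableFunctor G ↔ ∃ γ : 𝟭 D ⟶ G ⋙ F,
        ∀ Y : D, adj.counit.app Y ≫ γ.app Y ≫ adj.counit.app Y = adj.counit.app Y) := by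
  constructor
  · constructor
    · rintro ⟨P, hnat, hsep⟩
      refine ⟨⟨fun X => P _ X (adj.counit.app (F.obj X)), ?_⟩, ?_⟩
      · intro X Y f
        dsimp only [Functor.comp_obj, Functor.comp_map, Functor.id_obj, Functor.id_map]
        have h1 := hnat (G.map (F.map f)) (𝟙 Y) (adj.counit.app (F.obj Y))
        have h2 := hnat (𝟙 (G.obj (F.obj X))) f (adj.counit.app (F.obj X))
        have h3 : F.map (G.map (F.map f)) ≫ adj.counit.app (F.obj Y) ≫ F.map (𝟙 Y)
            = F.map (𝟙 (G.obj (F.obj X))) ≫ adj.counit.app (F.obj X) ≫ F.map f := by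
          simpa using adj.counit.naturality (F.map f)
        rw [h3, h2] at h1
        simpa using h1.symm
      · intro X
        dsimp only [Functor.comp_obj, Functor.id_obj]
        have key : adj.unit.app X ≫ P (G.obj (F.obj X)) X (adj.counit.app (F.obj X))
              ≫ adj.unit.app X
            = P X (G.obj (F.obj X)) (F.map (adj.unit.app X)) := by
          have h := hnat (adj.unit.app X) (adj.unit.app X) (adj.counit.app (F.obj X))
          dsimp only [Functor.comp_obj, Functor.id_obj] at h
          simp only [Adjunction.left_triangle_components_assoc] at h
          exact h.symm
        rw [key]
        have hFP := hsep (adj.unit.app X)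
        dsimp only [Functor.comp_obj, Functor.id_obj] at hFP
        have hn := adj.unit.naturality (P X (G.obj (F.obj X)) (F.map (adj.unit.app X)))
        have hn2 := adj.unit.naturality (adj.unit.app X)
        dsimp only [Functor.comp_obj, Functor.comp_map, Functor.id_obj, Functor.id_map]
          at hn hn2
        rw [hFP] at hn
        have h5 : P X (G.obj (F.obj X)) (F.map (adj.unit.app X))
              ≫ adj.unit.app (G.obj (F.obj X))
            = adj.unit.app X ≫ adj.unit.app (G.obj (F.obj X)) := by
          rw [hn, ← hn2]
        calc P X (G.obj (F.obj X)) (F.map (adj.unit.app X))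
            = (P X (G.obj (F.obj X)) (F.map (adj.unit.app X))
                ≫ adj.unit.app (G.obj (F.obj X)))
                ≫ G.map (adj.counit.app (F.obj X)) := by simp
          _ = (adj.unit.app X ≫ adj.unit.app (G.obj (F.obj X)))
                ≫ G.map (adj.counit.app (F.obj X)) := by rw [h5]
          _ = adj.unit.app X := by simp
    · rintro ⟨ν, hν⟩
      have hFid : ∀ X : C, F.map (adj.unit.app X) ≫ F.map (ν.app X) = 𝟙 (F.obj X) := by
        intro X
        have h := congrArg (fun t => F.map t ≫ adj.counit.app (F.obj X)) (hν X)
        simp only [Functor.map_comp, Category.assoc,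
          Adjunction.left_triangle_components, Category.comp_id] at h
        simpa using h
      refine ⟨fun X Y h => adj.unit.app X ≫ G.map h ≫ ν.app Y, ?_, ?_⟩
      · intro X X' Y Y' f g h
        dsimp only
        have h1 : adj.unit.app X' ≫ G.map (F.map f) = f ≫ adj.unit.app X := by
          simpa using (adj.unit.naturality f).symm
        have h2 : G.map (F.map g) ≫ ν.app Y' = ν.app Y ≫ g := by
          simpa using ν.naturality g
        simp only [Functor.map_comp, Category.assoc, h2, reassoc_of% h1]
      · intro X Y f
        dsimp only
        have h1 : adj.unit.app X ≫ G.map (F.map f) = f ≫ adj.unit.app Y := by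
          simpa using (adj.unit.naturality f).symm
        have h3 : adj.unit.app X ≫ G.map (F.map f) ≫ ν.app Y
            = f ≫ adj.unit.app Y ≫ ν.app Y := by
          rw [← Category.assoc, h1, Category.assoc]
        rw [h3, F.map_comp, F.map_comp, hFid, Category.comp_id]
  · constructor
    · rintro ⟨P, hnat, hsep⟩
      refine ⟨⟨fun Y => P Y _ (adj.unit.app (G.obj Y)), ?_⟩, ?_⟩
      · intro Y Y' f
        dsimp only [Functor.comp_obj, Functor.comp_map, Functor.id_obj, Functor.id_map]
        have h1 := hnat f (𝟙 (F.obj (G.obj Y'))) (adj.unit.app (G.obj Y'))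
        have h2 := hnat (𝟙 Y) (F.map (G.map f)) (adj.unit.app (G.obj Y))
        have h3 : G.map f ≫ adj.unit.app (G.obj Y') ≫ G.map (𝟙 (F.obj (G.obj Y')))
            = G.map (𝟙 Y) ≫ adj.unit.app (G.obj Y) ≫ G.map (F.map (G.map f)) := by
          simpa using (adj.unit.naturality (G.map f)).symm
        rw [h3, h2] at h1
        simpa using h1.symm
      · intro Y
        dsimp only [Functor.comp_obj, Functor.id_obj]
        have key : adj.counit.app Y ≫ P Y (F.obj (G.obj Y)) (adj.unit.app (G.obj Y))
              ≫ adj.counit.app Y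
            = P (F.obj (G.obj Y)) Y (G.map (adj.counit.app Y)) := by
          have h := hnat (adj.counit.app Y) (adj.counit.app Y) (adj.unit.app (G.obj Y))
          dsimp only [Functor.comp_obj, Functor.id_obj] at h
          simp only [Adjunction.right_triangle_components, Category.comp_id] at h
          exact h.symm
        rw [key]
        have hGP := hsep (adj.counit.app Y)
        dsimp only [Functor.comp_obj, Functor.id_obj] at hGP
        have hn := adj.counit.naturality (P (F.obj (G.obj Y)) Y (G.map (adj.counit.app Y)))
        have hn2 := adj.counit.naturality (adj.counit.app Y)
        dsimp only [Functor.comp_obj, Functor.comp_map, Functor.id_obj, Functor.id_map]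
          at hn hn2
        rw [hGP] at hn
        have h5 : adj.counit.app (F.obj (G.obj Y))
              ≫ P (F.obj (G.obj Y)) Y (G.map (adj.counit.app Y))
            = adj.counit.app (F.obj (G.obj Y)) ≫ adj.counit.app Y := by
          rw [← hn, hn2]
        calc P (F.obj (G.obj Y)) Y (G.map (adj.counit.app Y))
            = F.map (adj.unit.app (G.obj Y)) ≫ adj.counit.app (F.obj (G.obj Y))
                ≫ P (F.obj (G.obj Y)) Y (G.map (adj.counit.app Y)) := by simp
          _ = F.map (adj.unit.app (G.obj Y)) ≫ adj.counit.app (F.obj (G.obj Y))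
                ≫ adj.counit.app Y := by rw [h5]
          _ = adj.counit.app Y := by simp
    · rintro ⟨γ, hγ⟩
      have hGid : ∀ Y : D, G.map (γ.app Y) ≫ G.map (adj.counit.app Y) = 𝟙 (G.obj Y) := by
        intro Y
        have h := congrArg (fun t => adj.unit.app (G.obj Y) ≫ G.map t) (hγ Y)
        simp only [Functor.map_comp, ← Category.assoc,
          Adjunction.right_triangle_components, Category.id_comp] at h
        simpa using h
      refine ⟨fun X Y h => γ.app X ≫ F.map h ≫ adj.counit.app Y, ?_, ?_⟩
      · intro X X' Y Y' f g h
        dsimp only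
        have h1 : γ.app X' ≫ F.map (G.map f) = f ≫ γ.app X := by
          simpa using (γ.naturality f).symm
        have h2 : F.map (G.map g) ≫ adj.counit.app Y' = adj.counit.app Y ≫ g := by
          simpa using adj.counit.naturality g
        simp only [Functor.map_comp, Category.assoc, h2, reassoc_of% h1]
      · intro X Y f
        dsimp only
        have h2 : F.map (G.map f) ≫ adj.counit.app Y = adj.counit.app X ≫ f := by
          simpa using adj.counit.naturality f
        rw [h2, G.map_comp, G.map_comp, ← Category.assoc, hGid X, Category.id_comp]
end

section
/- Let (F ⊣ G) be an adjunction with unit η and counit ε, and let ν : GF → Id_C be a natural transformation. Then the following are equivalent: (1) η ∘ ν ∘ η = η; (2) Fν ∘ Fη = Id_F; (3) νG ∘ ηG = Id_G. -/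
open CategoryTheory

universe v₁ v₂ v₃ u₁ u₂ u₃ u v

theorem stmt14 {C : Type u₁} [Category.{v₁} C] {D : Type u₂} [Category.{v₂} D]
    {F : C ⥤ D} {G : D ⥤ C} (adj : F ⊣ G) (ν : F ⋙ G ⟶ 𝟭 C) :
    ((∀ X : C, adj.unit.app X ≫ ν.app X ≫ adj.unit.app X = adj.unit.app X) ↔
      (∀ X : C, F.map (adj.unit.app X) ≫ F.map (ν.app X) = 𝟙 (F.obj X))) ∧
    ((∀ X : C, adj.unit.app X ≫ ν.app X ≫ adj.unit.app X = adj.unit.app X) ↔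
      (∀ Y : D, adj.unit.app (G.obj Y) ≫ ν.app (G.obj Y) = 𝟙 (G.obj Y))) := by
  have h12 : (∀ X : C, adj.unit.app X ≫ ν.app X ≫ adj.unit.app X = adj.unit.app X) →
      (∀ X : C, F.map (adj.unit.app X) ≫ F.map (ν.app X) = 𝟙 (F.obj X)) := by
    intro h X
    have hF := congrArg F.map (h X)
    simp only [F.map_comp] at hF
    have hF' := reassoc_of% hF
    calc F.map (adj.unit.app X) ≫ F.map (ν.app X)
        = F.map (adj.unit.app X) ≫ F.map (ν.app X) ≫ F.map (adj.unit.app X) ≫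
            adj.counit.app (F.obj X) := by erw [adj.left_triangle_components]; simp
      _ = F.map (adj.unit.app X) ≫ adj.counit.app (F.obj X) := hF' _
      _ = 𝟙 (F.obj X) := adj.left_triangle_components X
  have h23 : (∀ X : C, F.map (adj.unit.app X) ≫ F.map (ν.app X) = 𝟙 (F.obj X)) →
      (∀ Y : D, adj.unit.app (G.obj Y) ≫ ν.app (G.obj Y) = 𝟙 (G.obj Y)) := by
    intro h Y
    set X := G.obj Y with hX
    have hG := congrArg G.map (h X)
    simp only [G.map_comp] at hG
    have hnν : ν.app X ≫ adj.unit.app X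
        = adj.unit.app (G.obj (F.obj X)) ≫ G.map (F.map (ν.app X)) := by
      simpa using adj.unit.naturality (ν.app X)
    have hnη : adj.unit.app X ≫ adj.unit.app (G.obj (F.obj X))
        = adj.unit.app X ≫ G.map (F.map (adj.unit.app X)) := by
      simpa using (adj.unit.naturality (adj.unit.app X)).symm
    have key : adj.unit.app X ≫ ν.app X ≫ adj.unit.app X = adj.unit.app X := by
      calc adj.unit.app X ≫ ν.app X ≫ adj.unit.app X
          = adj.unit.app X ≫ adj.unit.app (G.obj (F.obj X)) ≫ G.map (F.map (ν.app X)) := by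
            rw [hnν]
        _ = (adj.unit.app X ≫ adj.unit.app (G.obj (F.obj X))) ≫ G.map (F.map (ν.app X)) := by
            simp only [Category.assoc]
        _ = adj.unit.app X ≫ G.map (F.map (adj.unit.app X)) ≫ G.map (F.map (ν.app X)) := by
            rw [hnη]; simp only [Category.assoc]
        _ = adj.unit.app X := by rw [hG]; simp
    have key' := reassoc_of% key
    calc adj.unit.app X ≫ ν.app X
        = adj.unit.app X ≫ ν.app X ≫ adj.unit.app X ≫ G.map (adj.counit.app Y) := by
          rw [adj.right_triangle_components]
          exact congrArg (adj.unit.app X ≫ ·) (Category.comp_id (ν.app X)).symm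
      _ = adj.unit.app X ≫ G.map (adj.counit.app Y) := key' _
      _ = 𝟙 (G.obj Y) := adj.right_triangle_components Y
  have h31 : (∀ Y : D, adj.unit.app (G.obj Y) ≫ ν.app (G.obj Y) = 𝟙 (G.obj Y)) →
      (∀ X : C, adj.unit.app X ≫ ν.app X ≫ adj.unit.app X = adj.unit.app X) := by
    intro h X
    have hnν : G.map (F.map (adj.unit.app X)) ≫ ν.app (G.obj (F.obj X))
        = ν.app X ≫ adj.unit.app X := by simpa using ν.naturality (adj.unit.app X)
    have hnη : adj.unit.app X ≫ adj.unit.app (G.obj (F.obj X))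
        = adj.unit.app X ≫ G.map (F.map (adj.unit.app X)) := by
      simpa using (adj.unit.naturality (adj.unit.app X)).symm
    calc adj.unit.app X ≫ ν.app X ≫ adj.unit.app X
        = adj.unit.app X ≫ G.map (F.map (adj.unit.app X)) ≫ ν.app (G.obj (F.obj X)) := by
          rw [hnν]
      _ = (adj.unit.app X ≫ G.map (F.map (adj.unit.app X))) ≫ ν.app (G.obj (F.obj X)) := by
          simp only [Category.assoc]
      _ = adj.unit.app X ≫ adj.unit.app (G.obj (F.obj X)) ≫ ν.app (G.obj (F.obj X)) := by
          rw [← hnη]; simp only [Category.assoc]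
      _ = adj.unit.app X := by rw [h (F.obj X)]; simp
  exact ⟨⟨h12, fun h => h31 (h23 h)⟩, ⟨fun h => h23 (h12 h), h31⟩⟩
end

section
/- Let (F ⊣ G) be an adjunction with unit η and counit ε. If G is semiseparable, then the associated monad (GF, GεF, η) is separable; dually, if F is semiseparable, the associated comonad (FG, FηG, ε) is coseparable. -/
open CategoryTheory

universe v₁ v₂ v₃ u₁ u₂ u₃ u v

theorem stmt15 {C : Type u₁} [Category.{v₁} C] {D : Type u₂} [Category.{v₂} D]
    {F : C ⥤ D} {G : D ⥤ C} (adj : F ⊣ G) :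
    -- if G is semiseparable (the counit is regular), the monad GF is separable
    ((∃ γ : 𝟭 D ⟶ G ⋙ F,
        ∀ Y : D, adj.counit.app Y ≫ γ.app Y ≫ adj.counit.app Y = adj.counit.app Y) →
      ∃ σ : F ⋙ G ⟶ (F ⋙ G) ⋙ (F ⋙ G),
        (∀ X : C, σ.app X ≫ G.map (adj.counit.app (F.obj X)) = 𝟙 (G.obj (F.obj X))) ∧
        (∀ X : C, σ.app ((F ⋙ G).obj X) ≫
            G.map (F.map (G.map (adj.counit.app (F.obj X)))) =
          G.map (adj.counit.app (F.obj X)) ≫ σ.app X) ∧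
        (∀ X : C, G.map (adj.counit.app (F.obj X)) ≫ σ.app X =
          G.map (F.map (σ.app X)) ≫
            G.map (adj.counit.app (F.obj (G.obj (F.obj X)))))) ∧
    -- if F is semiseparable (the unit is regular), the comonad FG is coseparable
    ((∃ ν : F ⋙ G ⟶ 𝟭 C,
        ∀ X : C, adj.unit.app X ≫ ν.app X ≫ adj.unit.app X = adj.unit.app X) →
      ∃ τ : (G ⋙ F) ⋙ (G ⋙ F) ⟶ G ⋙ F,
        (∀ Y : D, F.map (adj.unit.app (G.obj Y)) ≫ τ.app Y = 𝟙 (F.obj (G.obj Y))) ∧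
        (∀ Y : D, F.map (adj.unit.app (G.obj ((G ⋙ F).obj Y))) ≫
            F.map (G.map (τ.app Y)) =
          τ.app Y ≫ F.map (adj.unit.app (G.obj Y))) ∧
        (∀ Y : D, τ.app Y ≫ F.map (adj.unit.app (G.obj Y)) =
          F.map (G.map (F.map (adj.unit.app (G.obj Y)))) ≫
            τ.app ((G ⋙ F).obj Y))) := by
  constructor
  · rintro ⟨γ, hγ⟩
    have key : ∀ Y : D, G.map (γ.app Y) ≫ G.map (adj.counit.app Y) = 𝟙 (G.obj Y) := by
      intro Y
      have h := congrArg G.map (hγ Y)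
      simp only [G.map_comp] at h
      have h2 := congrArg (fun t => adj.unit.app (G.obj Y) ≫ t) h
      simpa [adj.right_triangle_components] using h2
    refine ⟨{ app := fun X => G.map (γ.app (F.obj X)), naturality := ?_ }, ?_, ?_, ?_⟩
    · intro X X' f
      have := congrArg G.map (γ.naturality (F.map f))
      simpa using this
    · intro X
      exact key (F.obj X)
    · intro X
      have := congrArg G.map (γ.naturality (adj.counit.app (F.obj X)))
      simpa using this.symm
    · intro X
      have := congrArg G.map (adj.counit.naturality (γ.app (F.obj X)))
      simp only [Functor.comp_map, Functor.id_map, G.map_comp] at this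
      simpa using this.symm
  · rintro ⟨ν, hν⟩
    have key : ∀ X : C, F.map (adj.unit.app X) ≫ F.map (ν.app X) = 𝟙 (F.obj X) := by
      intro X
      have h := congrArg F.map (hν X)
      simp only [F.map_comp] at h
      have h2 := congrArg (fun t => t ≫ adj.counit.app (F.obj X)) h
      simpa [adj.left_triangle_components] using h2
    refine ⟨{ app := fun Y => F.map (ν.app (G.obj Y)), naturality := ?_ }, ?_, ?_, ?_⟩
    · intro Y Y' f
      have := congrArg F.map (ν.naturality (G.map f))
      simpa using this
    · intro Y
      exact key (G.obj Y)
    · intro Y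
      have := congrArg F.map (adj.unit.naturality (ν.app (G.obj Y)))
      simp only [Functor.comp_map, Functor.id_map, F.map_comp] at this
      exact this.symm
    · intro Y
      have := congrArg F.map (ν.naturality (adj.unit.app (G.obj Y)))
      simp only [Functor.comp_map, Functor.id_map, F.map_comp] at this
      exact this.symm
end

section
/- Let F ⊣ G ⊣ H : C → D be an adjoint triple. Then F is semiseparable if and only if H is semiseparable; F is separable iff H is separable; and F is naturally full iff H is naturally full. -/
open CategoryTheory

universe v₁ v₂ v₃ u₁ u₂ u₃ u v

namespace AdjTripleAux

variable {C : Type u₁} [Category.{v₁} C] {D : Type u₂} [Category.{v₂} D]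
variable {F H : C ⥤ D} {G : D ⥤ C}
variable (adj₁ : F ⊣ G) (adj₂ : G ⊣ H)
variable (P : ∀ X Y : C, (F.obj X ⟶ F.obj Y) → (X ⟶ Y))

/-- The natural transformation `ν : GF ⟶ 𝟭` extracted from `P`. -/
def nu (X : C) : G.obj (F.obj X) ⟶ X := P _ _ (adj₁.counit.app (F.obj X))

/-- The canonical natural transformation `σ : F ⟶ H` associated to `ν`. -/
def sigma (X : C) : F.obj X ⟶ H.obj X :=
  adj₂.unit.app (F.obj X) ≫ H.map (nu adj₁ P X)

/-- The mate `τ : 𝟭 ⟶ GH` of `ν`. -/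
def tau (X : C) : X ⟶ G.obj (H.obj X) :=
  adj₁.unit.app X ≫ G.map (sigma adj₁ adj₂ P X)

/-- The transferred family for `H`. -/
def Q (X Y : C) (k : H.obj X ⟶ H.obj Y) : X ⟶ Y :=
  tau adj₁ adj₂ P X ≫ G.map k ≫ adj₂.counit.app Y

/-- The idempotent `e = η₁ ≫ ν`. -/
def idem (X : C) : X ⟶ X := adj₁.unit.app X ≫ nu adj₁ P X

variable {P}

theorem P_eq (hP : HomNatural F P) (X Y : C) (h : F.obj X ⟶ F.obj Y) :
    P X Y h = adj₁.unit.app X ≫ G.map h ≫ nu adj₁ P Y := by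
  have key : F.map (adj₁.unit.app X ≫ G.map h) ≫ adj₁.counit.app (F.obj Y) ≫ F.map (𝟙 Y)
      = h := by
    simp
  calc P X Y h
      = P X Y (F.map (adj₁.unit.app X ≫ G.map h) ≫ adj₁.counit.app (F.obj Y) ≫ F.map (𝟙 Y)) := by
        rw [key]
    _ = _ := by rw [hP]; simp [nu]

theorem nu_nat (hP : HomNatural F P) {X Y : C} (f : X ⟶ Y) :
    G.map (F.map f) ≫ nu adj₁ P Y = nu adj₁ P X ≫ f := by
  have h1 := hP (𝟙 (G.obj (F.obj X))) f (adj₁.counit.app (F.obj X))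
  have h2 := hP (G.map (F.map f)) (𝟙 Y) (adj₁.counit.app (F.obj Y))
  have key : F.map (𝟙 (G.obj (F.obj X))) ≫ adj₁.counit.app (F.obj X) ≫ F.map f
      = F.map (G.map (F.map f)) ≫ adj₁.counit.app (F.obj Y) ≫ F.map (𝟙 Y) := by
    simp
  rw [key] at h1
  rw [h1] at h2
  simpa [nu] using h2.symm

theorem sigma_nat (hP : HomNatural F P) {X Y : C} (f : X ⟶ Y) :
    F.map f ≫ sigma adj₁ adj₂ P Y = sigma adj₁ adj₂ P X ≫ H.map f := by
  rw [sigma, sigma, ← Category.assoc, ← adj₂.unit_naturality (F.map f), Category.assoc,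
    ← H.map_comp, nu_nat adj₁ hP f, H.map_comp]
  simp only [Category.assoc]

theorem tau_nat (hP : HomNatural F P) {X Y : C} (f : X ⟶ Y) :
    f ≫ tau adj₁ adj₂ P Y = tau adj₁ adj₂ P X ≫ G.map (H.map f) := by
  rw [tau, tau, ← Category.assoc, ← adj₁.unit_naturality f, Category.assoc, ← G.map_comp,
    sigma_nat adj₁ adj₂ hP f, G.map_comp]
  simp only [Category.assoc]

theorem Q_natural (hP : HomNatural F P) : HomNatural H (Q adj₁ adj₂ P) := by
  intro X X' Y Y' f g h
  rw [Q, Q, G.map_comp, G.map_comp, ← Category.assoc, ← Category.assoc,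
    ← tau_nat adj₁ adj₂ hP f]
  simp [adj₂.counit_naturality g]

theorem tau_counit (X : C) :
    tau adj₁ adj₂ P X ≫ adj₂.counit.app X = adj₁.unit.app X ≫ nu adj₁ P X := by
  simp [tau, sigma]

theorem Q_Hmap {X Y : C} (f : X ⟶ Y) :
    Q adj₁ adj₂ P X Y (H.map f)
      = adj₁.unit.app X ≫ nu adj₁ P X ≫ f := by
  rw [Q, adj₂.counit_naturality f, ← Category.assoc, tau_counit, Category.assoc]

section Transfer

theorem idem_G (hP : HomNatural F P) (hFe : ∀ X : C, F.map (idem adj₁ P X) = 𝟙 _) (A : D) :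
    idem adj₁ P (G.obj A) = 𝟙 _ := by
  have h1 : idem adj₁ P (G.obj A) ≫ adj₁.unit.app (G.obj A) = adj₁.unit.app (G.obj A) := by
    rw [← adj₁.unit_naturality (idem adj₁ P (G.obj A)), hFe]
    simp
  calc idem adj₁ P (G.obj A)
      = idem adj₁ P (G.obj A) ≫ adj₁.unit.app (G.obj A) ≫ G.map (adj₁.counit.app A) := by
        rw [adj₁.right_triangle_components, Category.comp_id]
    _ = adj₁.unit.app (G.obj A) ≫ G.map (adj₁.counit.app A) := by
        rw [← Category.assoc, h1]
    _ = 𝟙 _ := adj₁.right_triangle_components A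

include adj₂ in
theorem idem_H (hP : HomNatural F P) (hFe : ∀ X : C, F.map (idem adj₁ P X) = 𝟙 _) (X : C) :
    H.map (idem adj₁ P X) = 𝟙 _ := by
  apply (adj₂.homEquiv _ _).symm.injective
  rw [Adjunction.homEquiv_counit, Adjunction.homEquiv_counit, adj₂.counit_naturality]
  have : adj₂.counit.app X ≫ idem adj₁ P X
      = idem adj₁ P (G.obj (H.obj X)) ≫ adj₂.counit.app X := by
    have nat1 : adj₂.counit.app X ≫ adj₁.unit.app X
        = adj₁.unit.app (G.obj (H.obj X)) ≫ G.map (F.map (adj₂.counit.app X)) :=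
      (adj₁.unit_naturality _).symm
    have nat3 : G.map (F.map (adj₂.counit.app X)) ≫ nu adj₁ P X
        = nu adj₁ P (G.obj (H.obj X)) ≫ adj₂.counit.app X := nu_nat adj₁ hP _
    simp only [idem]
    rw [← Category.assoc, nat1, Category.assoc, nat3]
    simp only [Category.assoc]
  rw [this, idem_G adj₁ hP hFe]
  simp

include adj₁ adj₂ in
theorem semisep_transfer (hsep : SemiseparableFunctor F) : SemiseparableFunctor H := by
  obtain ⟨P, hP, hF⟩ := hsep
  have hFe : ∀ X : C, F.map (idem adj₁ P X) = 𝟙 _ := by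
    intro X
    have := hF (𝟙 X)
    rw [F.map_id, P_eq adj₁ hP] at this
    simpa [idem] using this
  refine ⟨Q adj₁ adj₂ P, Q_natural adj₁ adj₂ hP, fun X Y f => ?_⟩
  rw [Q_Hmap, ← Category.assoc]
  rw [show (adj₁.unit.app X ≫ nu adj₁ P X) = idem adj₁ P X from rfl]
  rw [H.map_comp, idem_H adj₁ adj₂ hP hFe, Category.id_comp]

include adj₁ adj₂ in
theorem sep_transfer (hsep : SeparableFunctor F) : SeparableFunctor H := by
  obtain ⟨P, hP, hF⟩ := hsep
  have he : ∀ X : C, idem adj₁ P X = 𝟙 X := by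
    intro X
    have := hF (𝟙 X)
    rw [F.map_id, P_eq adj₁ hP] at this
    simpa [idem] using this
  refine ⟨Q adj₁ adj₂ P, Q_natural adj₁ adj₂ hP, fun X Y f => ?_⟩
  rw [Q_Hmap, ← Category.assoc]
  rw [show (adj₁.unit.app X ≫ nu adj₁ P X) = idem adj₁ P X from rfl, he]
  simp

include adj₁ adj₂ in
theorem natfull_transfer (hnf : NaturallyFullFunctor F) : NaturallyFullFunctor H := by
  obtain ⟨P, hP, hF⟩ := hnf
  have hnu : ∀ X : C, F.map (nu adj₁ P X) = adj₁.counit.app (F.obj X) := fun X => hF _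
  have hnuG : ∀ A : D, nu adj₁ P (G.obj A) = G.map (adj₁.counit.app A) := by
    intro A
    apply (adj₁.homEquiv _ _).symm.injective
    rw [Adjunction.homEquiv_counit, Adjunction.homEquiv_counit, hnu]
    simp
  have hsig : ∀ X : C, F.map (adj₂.counit.app X) ≫ sigma adj₁ adj₂ P X
      = adj₁.counit.app (H.obj X) := by
    intro X
    have nat2 : F.map (adj₂.counit.app X) ≫ adj₂.unit.app (F.obj X)
        = adj₂.unit.app (F.obj (G.obj (H.obj X))) ≫ H.map (G.map (F.map (adj₂.counit.app X))) :=
      (adj₂.unit_naturality _).symm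
    have nat3 : G.map (F.map (adj₂.counit.app X)) ≫ nu adj₁ P X
        = nu adj₁ P (G.obj (H.obj X)) ≫ adj₂.counit.app X := nu_nat adj₁ hP _
    have nat4 : adj₂.unit.app (F.obj (G.obj (H.obj X)))
        ≫ H.map (G.map (adj₁.counit.app (H.obj X)))
        = adj₁.counit.app (H.obj X) ≫ adj₂.unit.app (H.obj X) := adj₂.unit_naturality _
    rw [sigma, ← Category.assoc, nat2, Category.assoc, ← H.map_comp, nat3, hnuG,
      H.map_comp, ← Category.assoc, nat4, Category.assoc,
      adj₂.right_triangle_components]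
    simp
  have htau : ∀ X : C, adj₂.counit.app X ≫ tau adj₁ adj₂ P X = 𝟙 _ := by
    intro X
    have nat1 : adj₂.counit.app X ≫ adj₁.unit.app X
        = adj₁.unit.app (G.obj (H.obj X)) ≫ G.map (F.map (adj₂.counit.app X)) :=
      (adj₁.unit_naturality _).symm
    rw [tau, ← Category.assoc, nat1, Category.assoc, ← G.map_comp, hsig,
      adj₁.right_triangle_components]
    rfl
  refine ⟨Q adj₁ adj₂ P, Q_natural adj₁ adj₂ hP, fun X Y k => ?_⟩
  apply (adj₂.homEquiv _ _).symm.injective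
  rw [Adjunction.homEquiv_counit, Adjunction.homEquiv_counit, adj₂.counit_naturality, Q,
    ← Category.assoc, ← Category.assoc, htau]
  simp

end Transfer

section Op

variable (F : C ⥤ D)

theorem homNatural_op {P : ∀ X Y : C, (F.obj X ⟶ F.obj Y) → (X ⟶ Y)} (hP : HomNatural F P) :
    HomNatural F.op (fun X Y h => (P Y.unop X.unop h.unop).op) := by
  intro X X' Y Y' f g h
  have := hP g.unop f.unop h.unop
  apply Quiver.Hom.unop_inj
  simpa using this

theorem semiseparable_op_iff : SemiseparableFunctor F ↔ SemiseparableFunctor F.op := by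
  constructor
  · rintro ⟨P, hP, hF⟩
    refine ⟨fun X Y h => (P Y.unop X.unop h.unop).op, homNatural_op F hP, fun X Y f => ?_⟩
    apply Quiver.Hom.unop_inj
    simpa using hF f.unop
  · rintro ⟨P, hP, hF⟩
    refine ⟨fun X Y h => (P (Opposite.op Y) (Opposite.op X) h.op).unop, ?_, fun X Y f => ?_⟩
    · intro X X' Y Y' f g h
      have := hP g.op f.op h.op
      apply Quiver.Hom.op_inj
      simpa using this
    · apply Quiver.Hom.op_inj
      simpa using hF (f.op : Opposite.op Y ⟶ Opposite.op X)

theorem separable_op_iff : SeparableFunctor F ↔ SeparableFunctor F.op := by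
  constructor
  · rintro ⟨P, hP, hF⟩
    refine ⟨fun X Y h => (P Y.unop X.unop h.unop).op, homNatural_op F hP, fun X Y f => ?_⟩
    apply Quiver.Hom.unop_inj
    simpa using hF f.unop
  · rintro ⟨P, hP, hF⟩
    refine ⟨fun X Y h => (P (Opposite.op Y) (Opposite.op X) h.op).unop, ?_, fun X Y f => ?_⟩
    · intro X X' Y Y' f g h
      have := hP g.op f.op h.op
      apply Quiver.Hom.op_inj
      simpa using this
    · apply Quiver.Hom.op_inj
      simpa using hF (f.op : Opposite.op Y ⟶ Opposite.op X)

theorem naturallyFull_op_iff : NaturallyFullFunctor F ↔ NaturallyFullFunctor F.op := by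
  constructor
  · rintro ⟨P, hP, hF⟩
    refine ⟨fun X Y h => (P Y.unop X.unop h.unop).op, homNatural_op F hP, fun X Y h => ?_⟩
    apply Quiver.Hom.unop_inj
    simpa using hF h.unop
  · rintro ⟨P, hP, hF⟩
    refine ⟨fun X Y h => (P (Opposite.op Y) (Opposite.op X) h.op).unop, ?_, fun X Y h => ?_⟩
    · intro X X' Y Y' f g h
      have := hP g.op f.op h.op
      apply Quiver.Hom.op_inj
      simpa using this
    · apply Quiver.Hom.op_inj
      simpa using hF h.op

end Op

end AdjTripleAux

theorem stmt16 {C : Type u₁} [Category.{v₁} C] {D : Type u₂} [Category.{v₂} D]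
    (F H : C ⥤ D) (G : D ⥤ C) (adj₁ : F ⊣ G) (adj₂ : G ⊣ H) :
    (SemiseparableFunctor F ↔ SemiseparableFunctor H) ∧
    (SeparableFunctor F ↔ SeparableFunctor H) ∧
    (NaturallyFullFunctor F ↔ NaturallyFullFunctor H) := by
  have adj₁' : H.op ⊣ G.op := adj₂.op
  have adj₂' : G.op ⊣ F.op := adj₁.op
  refine ⟨⟨fun h => AdjTripleAux.semisep_transfer adj₁ adj₂ h, fun h => ?_⟩,
    ⟨fun h => AdjTripleAux.sep_transfer adj₁ adj₂ h, fun h => ?_⟩,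
    ⟨fun h => AdjTripleAux.natfull_transfer adj₁ adj₂ h, fun h => ?_⟩⟩
  · exact (AdjTripleAux.semiseparable_op_iff F).mpr
      (AdjTripleAux.semisep_transfer adj₁' adj₂'
        ((AdjTripleAux.semiseparable_op_iff H).mp h))
  · exact (AdjTripleAux.separable_op_iff F).mpr
      (AdjTripleAux.sep_transfer adj₁' adj₂'
        ((AdjTripleAux.separable_op_iff H).mp h))
  · exact (AdjTripleAux.naturallyFull_op_iff F).mpr
      (AdjTripleAux.natfull_transfer adj₁' adj₂'
        ((AdjTripleAux.naturallyFull_op_iff H).mp h))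
end

section
/- Let G : D → C be a coreflection (i.e., G has a fully faithful left adjoint). Then the following are equivalent: (1) G is naturally full; (2) G is semiseparable; (3) G is a bireflection; (4) G is Frobenius. -/
open CategoryTheory

universe v₁ v₂ v₃ u₁ u₂ u₃ u v

/-- `G` is Frobenius: some functor is both left and right adjoint to `G`. -/
def FrobeniusFunctor {C : Type u₁} [Category.{v₁} C] {D : Type u₂} [Category.{v₂} D]
    (G : D ⥤ C) : Prop :=
  ∃ F : C ⥤ D, Nonempty (F ⊣ G) ∧ Nonempty (G ⊣ F)

/-- `G` is a bireflection: it has a fully faithful functor `F` as both left and right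
adjoint, with the coherence condition `γ ∘ ε = Id` where `ε` is the counit of `F ⊣ G`
and `γ` is the unit of `G ⊣ F`. -/
def Bireflection {C : Type u₁} [Category.{v₁} C] {D : Type u₂} [Category.{v₂} D]
    (G : D ⥤ C) : Prop :=
  ∃ (F : C ⥤ D) (adjl : F ⊣ G) (adjr : G ⊣ F), F.Full ∧ F.Faithful ∧
    ∀ Y : D, adjl.counit.app Y ≫ adjr.unit.app Y = 𝟙 (F.obj (G.obj Y))

section Aux

variable {C : Type u₁} [Category.{v₁} C] {D : Type u₂} [Category.{v₂} D]
variable (G : D ⥤ C) (F : C ⥤ D) (adj : F ⊣ G) [F.Full] [F.Faithful]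

/-- `G ∘ F` applied to `η_c` equals `η` at `G F c`. -/
lemma aux_gf_unit (c : C) :
    G.map (F.map (adj.unit.app c)) = adj.unit.app (G.obj (F.obj c)) := by
  have := adj.unit.naturality (adj.unit.app c)
  simp only [Functor.id_map, Functor.comp_map] at this
  rw [← cancel_epi (adj.unit.app c)]
  exact this.symm

include adj in
lemma aux_gf_inj {a b : C} (u v : a ⟶ b)
    (huv : G.map (F.map u) = G.map (F.map v)) : u = v := by
  have hu := adj.unit.naturality u
  have hv := adj.unit.naturality v
  simp only [Functor.id_map, Functor.comp_map] at hu hv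
  rw [← cancel_mono (adj.unit.app b)]
  rw [hu, hv, huv]

lemma aux_gcounit_unit (X : D) :
    G.map (adj.counit.app X) ≫ adj.unit.app (G.obj X) = 𝟙 _ := by
  rw [← cancel_epi (adj.unit.app (G.obj X))]
  simp [adj.right_triangle_components_assoc]

lemma nf_to_ss (h : NaturallyFullFunctor G) : SemiseparableFunctor G := by
  obtain ⟨P, hnat, hnf⟩ := h
  exact ⟨P, hnat, fun X Y f => by rw [hnf]⟩

include adj in
lemma ss_to_nf (h : SemiseparableFunctor G) : NaturallyFullFunctor G := by
  obtain ⟨P, hnat, hss⟩ := h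
  refine ⟨P, hnat, fun X Y h => ?_⟩
  have key : G.map (adj.counit.app X) ≫ h = G.map (F.map h ≫ adj.counit.app Y) := by
    rw [← cancel_epi (adj.unit.app (G.obj X))]
    rw [adj.right_triangle_components_assoc]
    have hn := adj.unit.naturality h
    simp only [Functor.id_map, Functor.comp_map] at hn
    rw [G.map_comp, ← Category.assoc, ← hn, Category.assoc,
      adj.right_triangle_components]
    simp
  have h2 := hnat (adj.counit.app X) (𝟙 Y) h
  simp only [G.map_id, Category.comp_id, Functor.id_obj, Functor.comp_obj] at h2
  rw [← cancel_epi (G.map (adj.counit.app X))]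
  rw [← G.map_comp, ← h2, key]
  exact hss (F.map h ≫ adj.counit.app Y)

include adj in
lemma nf_to_bir (h : NaturallyFullFunctor G) : Bireflection G := by
  obtain ⟨P, hnat, hnf⟩ := h
  -- the unit of the right adjunction
  have hγnat : ∀ {X Y : D} (f : X ⟶ Y),
      P X (F.obj (G.obj X)) (adj.unit.app (G.obj X)) ≫ F.map (G.map f)
        = f ≫ P Y (F.obj (G.obj Y)) (adj.unit.app (G.obj Y)) := by
    intro X Y f
    have h1 := hnat (𝟙 X) (F.map (G.map f)) (adj.unit.app (G.obj X))
    have h2 := hnat f (𝟙 (F.obj (G.obj Y))) (adj.unit.app (G.obj Y))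
    simp only [G.map_id, Category.id_comp, Category.comp_id] at h1 h2
    rw [← h1, ← h2]
    congr 1
    have := adj.unit.naturality (G.map f)
    simp only [Functor.id_map, Functor.comp_map] at this
    rw [← this]
  let γ : 𝟭 D ⟶ G.comp F :=
    { app := fun X => P X (F.obj (G.obj X)) (adj.unit.app (G.obj X))
      naturality := by
        intro X Y f
        simpa using (hγnat f).symm }
  let δ : F.comp G ⟶ 𝟭 C :=
    { app := fun c => inv (adj.unit.app c)
      naturality := by
        intro a b u
        have := adj.unit.naturality u
        simp only [Functor.id_map, Functor.comp_map] at this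
        simp only [Functor.comp_map, Functor.id_map]
        rw [IsIso.comp_inv_eq, Category.assoc, this, IsIso.inv_hom_id_assoc] }
  have hγ : ∀ X : D, G.map (γ.app X) = adj.unit.app (G.obj X) := fun X => hnf _
  have right_tri : ∀ c : C, γ.app (F.obj c) ≫ F.map (δ.app c) = 𝟙 (F.obj c) := by
    intro c
    have hw : γ.app (F.obj c) = F.map (adj.unit.app c) := by
      have hfull : γ.app (F.obj c) = F.map (F.preimage (γ.app (F.obj c))) :=
        (F.map_preimage _).symm
      rw [hfull]
      congr 1
      apply aux_gf_inj G F adj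
      rw [← hfull, hγ, aux_gf_unit G F adj]
    rw [hw]
    show F.map (adj.unit.app c) ≫ F.map (inv (adj.unit.app c)) = _
    rw [← F.map_comp, IsIso.hom_inv_id, F.map_id]
    rfl
  let adjr : G ⊣ F :=
    { unit := γ
      counit := δ
      left_triangle_components := by
        intro X
        show G.map (γ.app X) ≫ inv (adj.unit.app (G.obj X)) = 𝟙 _
        rw [hγ, IsIso.hom_inv_id]
      right_triangle_components := right_tri }
  refine ⟨F, adj, adjr, inferInstance, inferInstance, fun Y => ?_⟩
  show adj.counit.app Y ≫ γ.app Y = 𝟙 _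
  have hv : adj.counit.app Y ≫ γ.app Y
      = F.map (F.preimage (adj.counit.app Y ≫ γ.app Y)) := (F.map_preimage _).symm
  rw [hv]
  have : F.preimage (adj.counit.app Y ≫ γ.app Y) = 𝟙 (G.obj Y) := by
    apply aux_gf_inj G F adj
    rw [← hv, F.map_id, G.map_id, G.map_comp, hγ]
    exact aux_gcounit_unit G F adj Y
  rw [this, F.map_id]
  rfl

lemma bir_to_frob (h : Bireflection G) : FrobeniusFunctor G := by
  obtain ⟨F', adjl', adjr', _, _, _⟩ := h
  exact ⟨F', ⟨adjl'⟩, ⟨adjr'⟩⟩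

include adj in
lemma frob_to_ss (h : FrobeniusFunctor G) : SemiseparableFunctor G := by
  obtain ⟨F', ⟨adjl'⟩, ⟨adjr'⟩⟩ := h
  let adjr : G ⊣ F := adjr'.ofNatIsoRight (adjl'.leftAdjointUniq adj)
  refine ⟨fun X Y h => adjr.unit.app X ≫ F.map h ≫
      F.map (adj.unit.app (G.obj Y) ≫ adjr.counit.app (G.obj Y)) ≫ adj.counit.app Y,
    ?_, ?_⟩
  · intro X X' Y Y' f g h
    have hγ := adjr.unit.naturality f
    simp only [Functor.id_map, Functor.comp_map] at hγ
    have hδ := adjr.counit.naturality (G.map g)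
    simp only [Functor.id_map, Functor.comp_map] at hδ
    have hη := adj.unit.naturality (G.map g)
    simp only [Functor.id_map, Functor.comp_map] at hη
    have hε := adj.counit.naturality g
    simp only [Functor.id_map, Functor.comp_map] at hε
    have tail : F.map (G.map g) ≫ F.map (adj.unit.app (G.obj Y')) ≫
          F.map (adjr.counit.app (G.obj Y')) ≫ adj.counit.app Y'
        = F.map (adj.unit.app (G.obj Y)) ≫ F.map (adjr.counit.app (G.obj Y)) ≫
          adj.counit.app Y ≫ g := by
      rw [← Category.assoc, ← F.map_comp, hη, F.map_comp, Category.assoc]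
      rw [← Category.assoc (F.map (G.map (F.map (G.map g)))), ← F.map_comp, hδ,
        F.map_comp, Category.assoc, hε]
    simp only [F.map_comp, Category.assoc]
    rw [← Category.assoc (adjr.unit.app X'), ← hγ, Category.assoc, tail]
  · intro X Y f
    have hγ := adjr.unit.naturality f
    simp only [Functor.id_map, Functor.comp_map] at hγ
    have hηδ := adj.unit.naturality (adjr.counit.app (G.obj Y))
    simp only [Functor.id_map, Functor.comp_map, Functor.comp_obj, Functor.id_obj] at hηδ
    simp only [F.map_comp, G.map_comp, Category.assoc]
    rw [← Category.assoc (G.map (adjr.unit.app X)), ← G.map_comp, ← Category.assoc,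
      ← G.map_comp, ← hγ, G.map_comp, G.map_comp, Category.assoc]
    rw [aux_gf_unit G F adj (G.obj Y)]
    rw [← Category.assoc (adj.unit.app (G.obj (F.obj (G.obj Y)))), ← hηδ]
    rw [Category.assoc, Category.assoc, adj.right_triangle_components, Category.comp_id]
    erw [adjr.left_triangle_components Y]
    simp

end Aux

theorem stmt17 {C : Type u₁} [Category.{v₁} C] {D : Type u₂} [Category.{v₂} D]
    (G : D ⥤ C) (F : C ⥤ D) (adj : F ⊣ G) [F.Full] [F.Faithful] :
    (NaturallyFullFunctor G ↔ SemiseparableFunctor G) ∧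
    (SemiseparableFunctor G ↔ Bireflection G) ∧
    (Bireflection G ↔ FrobeniusFunctor G) := by
  refine ⟨⟨nf_to_ss G, ss_to_nf G F adj⟩,
    ⟨fun h => nf_to_bir G F adj (ss_to_nf G F adj h),
     fun h => frob_to_ss G F adj (bir_to_frob G h)⟩,
    ⟨bir_to_frob G,
     fun h => nf_to_bir G F adj (ss_to_nf G F adj (frob_to_ss G F adj h))⟩⟩
end

section
/- Let φ : R → S be a ring homomorphism. The extension of scalars functor S ⊗_R (-) : R-Mod → S-Mod is semiseparable if and only if there exists an R-bimodule map E : S → R with φ ∘ E ∘ φ = φ, equivalently with φ(E(1_S)) = 1_S. -/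
open CategoryTheory

universe v₁ v₂ v₃ u₁ u₂ u₃ u v

section Aux


variable {R S : Type u} [Ring R] [Ring S] (φ : R →+* S)
    (F : ModuleCat.{u} R ⥤ ModuleCat.{u} S)
    (adj : F ⊣ ModuleCat.restrictScalars φ)

def rmul (s : S) : ModuleCat.of S S ⟶ ModuleCat.of S S := ModuleCat.ofHom
  { toFun := (· * s)
    map_add' := fun a b => add_mul a b s
    map_smul' := fun t x => mul_assoc t x s }

def rho (r : R) : ModuleCat.of R R ⟶ ModuleCat.of R R := ModuleCat.ofHom
  { toFun := (· * r)
    map_add' := fun a b => add_mul a b r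
    map_smul' := fun t x => mul_assoc t x r }

noncomputable def phiHom : ModuleCat.of R R ⟶ (ModuleCat.restrictScalars φ).obj (ModuleCat.of S S) :=
  ModuleCat.semilinearMapAddEquiv φ (ModuleCat.of R R) (ModuleCat.of S S) φ.toSemilinearMap

lemma phiHom_apply (r : R) : phiHom φ r = φ r := rfl


noncomputable def eX : (F.obj (ModuleCat.of R R) : Type u) :=
  adj.unit.app (ModuleCat.of R R) (1 : R)

noncomputable def chi : F.obj (ModuleCat.of R R) ⟶ ModuleCat.of S S :=
  (adj.homEquiv (ModuleCat.of R R) (ModuleCat.of S S)).symm (phiHom φ)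

noncomputable def betaAux :
    S →ₗ[S] ((ModuleCat.restrictScalars φ).obj (F.obj (ModuleCat.of R R)) : Type u) :=
  { toFun := fun s => s • eX φ F adj
    map_add' := fun a b => add_smul a b _
    map_smul' := fun t x => mul_smul t x _ }

noncomputable def beta : ModuleCat.of S S ⟶ F.obj (ModuleCat.of R R) := ModuleCat.ofHom (betaAux φ F adj)

lemma unit_app_r (r : R) :
    adj.unit.app (ModuleCat.of R R) r = φ r • (eX φ F adj : (F.obj (ModuleCat.of R R) : Type u)) := by
  conv_lhs => rw [← mul_one r, (smul_eq_mul (α := R) (a := r) (b := 1)).symm]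
  rw [map_smul]
  exact ModuleCat.restrictScalars.smul_def φ r _

lemma chi_e : chi φ F adj (eX φ F adj) = (1 : S) := by
  have h : adj.homEquiv _ _ (chi φ F adj) = phiHom φ :=
    (adj.homEquiv _ _).apply_symm_apply (phiHom φ)
  rw [Adjunction.homEquiv_unit] at h
  have h2 := ConcreteCategory.congr_hom h (1 : R)
  rw [ModuleCat.comp_apply] at h2
  exact h2.trans (map_one φ)

lemma beta_apply (s : S) : beta φ F adj s = s • eX φ F adj := rfl

lemma chi_beta : chi φ F adj ≫ beta φ F adj = 𝟙 (F.obj (ModuleCat.of R R)) := by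
  apply (adj.homEquiv (ModuleCat.of R R) (F.obj (ModuleCat.of R R))).injective
  rw [Adjunction.homEquiv_unit, Adjunction.homEquiv_unit]
  refine ModuleCat.hom_ext (LinearMap.ext fun r => ?_)
  show beta φ F adj (chi φ F adj ((adj.unit.app (ModuleCat.of R R)) r))
      = (adj.unit.app (ModuleCat.of R R)) r
  rw [unit_app_r φ F adj r, map_smul, chi_e, beta_apply]
  show (φ r * 1) • eX φ F adj = φ r • eX φ F adj
  rw [mul_one]

lemma rmul_comp (s t : S) : rmul s ≫ rmul t = rmul (s * t) := by
  refine ModuleCat.hom_ext (LinearMap.ext fun x => ?_)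
  have h : ∀ y : S, (y * s) * t = y * (s * t) := fun y => mul_assoc y s t
  exact h x

lemma rmul_one : rmul (1 : S) = 𝟙 (ModuleCat.of S S) := by
  refine ModuleCat.hom_ext (LinearMap.ext fun x => ?_)
  have h : ∀ y : S, y * 1 = y := mul_one
  exact h x

lemma rmul_add (s t : S) : rmul s + rmul t = rmul (s + t) := by
  refine ModuleCat.hom_ext (LinearMap.ext fun x => ?_)
  have h : ∀ y : S, y * s + y * t = y * (s + t) := fun y => (mul_add y s t).symm
  exact h x

lemma htrans (r : R) :
    F.map (rho r) ≫ chi φ F adj = chi φ F adj ≫ rmul (φ r) := by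
  apply (adj.homEquiv (ModuleCat.of R R) (ModuleCat.of S S)).injective
  rw [Adjunction.homEquiv_naturality_left, Adjunction.homEquiv_naturality_right]
  have hc : adj.homEquiv _ _ (chi φ F adj) = phiHom φ :=
    (adj.homEquiv _ _).apply_symm_apply (phiHom φ)
  rw [hc]
  refine ModuleCat.hom_ext (LinearMap.ext fun x => ?_)
  have h : ∀ y : R, φ (y * r) = φ y * φ r := fun y => map_mul φ y r
  exact h x

lemma Fmap_rho_e (r : R) :
    F.map (rho r) (eX φ F adj) = φ r • eX φ F adj := by
  have h := adj.unit.naturality (rho r)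
  have h2 := ConcreteCategory.congr_hom h (1 : R)
  rw [ModuleCat.comp_apply, ModuleCat.comp_apply] at h2
  have h3 : adj.unit.app (ModuleCat.of R R) ((1 : R) * r)
      = F.map (rho r) (eX φ F adj) := h2
  rw [one_mul] at h3
  rw [← h3, unit_app_r]

lemma hbeta_rho (r : R) :
    beta φ F adj ≫ F.map (rho r) = rmul (φ r) ≫ beta φ F adj := by
  refine ModuleCat.hom_ext (LinearMap.ext fun s => ?_)
  have key : ∀ y : S, F.map (rho r) (y • (eX φ F adj : (F.obj (ModuleCat.of R R) : Type u))) = (y * φ r) • eX φ F adj := by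
    intro y
    rw [map_smul, Fmap_rho_e, ← mul_smul]
  exact key s

include φ adj in
lemma Fmap_zero {A B : ModuleCat.{u} R} : F.map (0 : A ⟶ B) = 0 := by
  apply (adj.homEquiv A (F.obj B)).injective
  rw [show (F.map (0 : A ⟶ B)) = F.map (0 : A ⟶ B) ≫ 𝟙 (F.obj B) from (Category.comp_id _).symm,
    Adjunction.homEquiv_naturality_left, Limits.zero_comp, Adjunction.homEquiv_unit]
  have hz : (ModuleCat.restrictScalars φ).map (0 : F.obj A ⟶ F.obj B) = 0 := by ext x; rfl
  rw [hz, Limits.comp_zero]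

variable {P : ∀ X Y : ModuleCat.{u} R, (F.obj X ⟶ F.obj Y) → (X ⟶ Y)}

include φ adj in
lemma P_zero (hnat : HomNatural F P) {A B : ModuleCat.{u} R} : P A B 0 = 0 := by
  have h0 : F.map (0 : A ⟶ A) ≫ (0 : F.obj A ⟶ F.obj B) ≫ F.map (𝟙 B) = 0 := by
    simp
  have h := hnat (0 : A ⟶ A) (𝟙 B) (0 : F.obj A ⟶ F.obj B)
  rw [h0] at h
  rw [h, Limits.zero_comp]

include φ adj in
lemma P_add (hnat : HomNatural F P) {A B : ModuleCat.{u} R} (h h' : F.obj A ⟶ F.obj B) :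
    P A B (h + h') = P A B h + P A B h' := by
  let W : ModuleCat.{u} R := ModuleCat.of R (↑A × ↑A)
  let W' : ModuleCat.{u} R := ModuleCat.of R (↑B × ↑B)
  let i1 : A ⟶ W := ModuleCat.ofHom (LinearMap.inl R ↑A ↑A)
  let i2 : A ⟶ W := ModuleCat.ofHom (LinearMap.inr R ↑A ↑A)
  let p1 : W ⟶ A := ModuleCat.ofHom (LinearMap.fst R ↑A ↑A)
  let p2 : W ⟶ A := ModuleCat.ofHom (LinearMap.snd R ↑A ↑A)
  let j1 : B ⟶ W' := ModuleCat.ofHom (LinearMap.inl R ↑B ↑B)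
  let j2 : B ⟶ W' := ModuleCat.ofHom (LinearMap.inr R ↑B ↑B)
  let q1 : W' ⟶ B := ModuleCat.ofHom (LinearMap.fst R ↑B ↑B)
  let q2 : W' ⟶ B := ModuleCat.ofHom (LinearMap.snd R ↑B ↑B)
  have hi11 : i1 ≫ p1 = 𝟙 A := by ext a; rfl
  have hi12 : i1 ≫ p2 = (0 : A ⟶ A) := by ext a; rfl
  have hi21 : i2 ≫ p1 = (0 : A ⟶ A) := by ext a; rfl
  have hi22 : i2 ≫ p2 = 𝟙 A := by ext a; rfl
  have hj11 : j1 ≫ q1 = 𝟙 B := by ext a; rfl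
  have hj12 : j1 ≫ q2 = (0 : B ⟶ B) := by ext a; rfl
  have hj21 : j2 ≫ q1 = (0 : B ⟶ B) := by ext a; rfl
  have hj22 : j2 ≫ q2 = 𝟙 B := by ext a; rfl
  let k : F.obj W ⟶ F.obj W' := F.map p1 ≫ h ≫ F.map j1 + F.map p2 ≫ h' ≫ F.map j2
  have expand : ∀ (f : A ⟶ W) (g : W' ⟶ B),
      F.map f ≫ k ≫ F.map g
        = F.map (f ≫ p1) ≫ h ≫ F.map (j1 ≫ g) + F.map (f ≫ p2) ≫ h' ≫ F.map (j2 ≫ g) := by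
    intro f g
    simp only [k, Preadditive.comp_add, Preadditive.add_comp, Category.assoc, Functor.map_comp]
  have e1 : F.map i1 ≫ k ≫ F.map q1 = h := by
    rw [expand, hi11, hi12, hj11, hj21, Fmap_zero φ F adj, Fmap_zero φ F adj]
    simp
  have e2 : F.map i2 ≫ k ≫ F.map q2 = h' := by
    rw [expand, hi21, hi22, hj12, hj22, Fmap_zero φ F adj, Fmap_zero φ F adj]
    simp
  have e12 : F.map i1 ≫ k ≫ F.map q2 = 0 := by
    rw [expand, hi11, hi12, hj12, hj22, Fmap_zero φ F adj, Fmap_zero φ F adj]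
    simp
  have e21 : F.map i2 ≫ k ≫ F.map q1 = 0 := by
    rw [expand, hi21, hi22, hj11, hj21, Fmap_zero φ F adj, Fmap_zero φ F adj]
    simp
  have eA : F.map (i1 + i2) ≫ k ≫ F.map (q1 + q2) = h + h' := by
    rw [expand, Preadditive.add_comp, Preadditive.add_comp, Preadditive.comp_add,
      Preadditive.comp_add, hi11, hi12, hi21, hi22, hj11, hj12, hj21, hj22]
    simp
  have hP1 : P A B h = i1 ≫ P W W' k ≫ q1 := by rw [← e1, hnat]
  have hP2 : P A B h' = i2 ≫ P W W' k ≫ q2 := by rw [← e2, hnat]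
  have hc12 : i1 ≫ P W W' k ≫ q2 = 0 := by rw [← hnat, e12, P_zero φ F adj hnat]
  have hc21 : i2 ≫ P W W' k ≫ q1 = 0 := by rw [← hnat, e21, P_zero φ F adj hnat]
  have hsum : P A B (h + h') = (i1 + i2) ≫ P W W' k ≫ (q1 + q2) := by rw [← eA, hnat]
  rw [hsum]
  simp only [Preadditive.add_comp, Preadditive.comp_add]
  rw [hc12, hc21, ← hP1, ← hP2]
  simp

noncomputable def mS (s : S) : F.obj (ModuleCat.of R R) ⟶ F.obj (ModuleCat.of R R) :=
  chi φ F adj ≫ rmul s ≫ beta φ F adj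

lemma mS_one : mS φ F adj (1 : S) = 𝟙 (F.obj (ModuleCat.of R R)) := by
  rw [mS, rmul_one, Category.id_comp, chi_beta]

lemma mS_add (s t : S) : mS φ F adj s + mS φ F adj t = mS φ F adj (s + t) := by
  rw [mS, mS, mS, ← rmul_add, Preadditive.add_comp, Preadditive.comp_add]

lemma mS_left (r : R) (s : S) :
    F.map (rho r) ≫ mS φ F adj s = mS φ F adj (φ r * s) := by
  rw [mS, mS, ← Category.assoc, htrans, Category.assoc, ← Category.assoc (rmul (φ r)),
    rmul_comp]

lemma mS_right (s : S) (r : R) :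
    mS φ F adj s ≫ F.map (rho r) = mS φ F adj (s * φ r) := by
  rw [mS, mS, Category.assoc, Category.assoc, hbeta_rho, ← Category.assoc (rmul s),
    rmul_comp]

lemma hom_RR_apply (f : ModuleCat.of R R ⟶ ModuleCat.of R R) (r : R) : f r = r • f (1 : R) := by
  have h : ∀ y : R, f (y * 1) = y • f (1 : R) := fun y => map_smul f.hom y (1 : R)
  conv_lhs => rw [← mul_one r]
  exact h r

include φ adj in
lemma forward (hF : SemiseparableFunctor F) :
    ∃ E : S →+ R,
      (∀ (r : R) (s : S), E (φ r * s) = r * E s) ∧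
      (∀ (s : S) (r : R), E (s * φ r) = E s * r) ∧
      φ (E 1) = 1 := by
  obtain ⟨P, hnat, hsep⟩ := hF
  set X := ModuleCat.of R R with hX
  let E0 : S → R := fun s => P X X (mS φ F adj s) (1 : R)
  have hadd : ∀ s t : S, E0 (s + t) = E0 s + E0 t := by
    intro s t
    have h1 : P X X (mS φ F adj (s + t)) = P X X (mS φ F adj s) + P X X (mS φ F adj t) := by
      rw [← mS_add, P_add φ F adj hnat]
    show P X X (mS φ F adj (s + t)) (1 : R) = _
    rw [h1]
    rfl
  have hleft : ∀ (r : R) (s : S), E0 (φ r * s) = r * E0 s := by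
    intro r s
    have h := hnat (rho r) (𝟙 X) (mS φ F adj s)
    rw [CategoryTheory.Functor.map_id, Category.comp_id, Category.comp_id, mS_left] at h
    show P X X (mS φ F adj (φ r * s)) (1 : R) = _
    rw [h]
    have h2 : (rho r ≫ P X X (mS φ F adj s)) (1 : R)
        = P X X (mS φ F adj s) ((1 : R) * r) := rfl
    rw [h2, one_mul, hom_RR_apply]
    rfl
  have hright : ∀ (s : S) (r : R), E0 (s * φ r) = E0 s * r := by
    intro s r
    have h := hnat (𝟙 X) (rho r) (mS φ F adj s)
    rw [CategoryTheory.Functor.map_id, Category.id_comp, Category.id_comp, mS_right] at h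
    show P X X (mS φ F adj (s * φ r)) (1 : R) = _
    rw [h]
    rfl
  have hone : φ (E0 1) = 1 := by
    have hg : F.map (P X X (𝟙 (F.obj X))) = 𝟙 (F.obj X) := by
      have := hsep (𝟙 X)
      rwa [CategoryTheory.Functor.map_id] at this
    have hn := adj.unit.naturality (P X X (𝟙 (F.obj X)))
    simp only [Functor.id_obj, Functor.id_map, CategoryTheory.Functor.comp_map, hg,
      CategoryTheory.Functor.map_id, Category.comp_id] at hn
    have h1 := ConcreteCategory.congr_hom hn (1 : R)
    rw [ModuleCat.comp_apply] at h1
    -- h1 : unit (P (𝟙) 1) = unit 1  (directions to check)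
    have hE1 : E0 1 = P X X (𝟙 (F.obj X)) (1 : R) := by
      show P X X (mS φ F adj 1) (1 : R) = _
      rw [mS_one]
    have h2 : adj.unit.app X (P X X (𝟙 (F.obj X)) (1 : R)) = eX φ F adj := h1
    rw [unit_app_r] at h2
    have h3 := congrArg (chi φ F adj) h2
    rw [map_smul, chi_e] at h3
    have h4 : φ (P X X (𝟙 (F.obj X)) (1 : R)) * 1 = 1 := h3
    rw [mul_one] at h4
    rw [hE1]
    exact h4
  exact ⟨AddMonoidHom.mk' E0 hadd, hleft, hright, hone⟩

section Backward

variable (E : S →+ R)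
  (hleft : ∀ (r : R) (s : S), E (φ r * s) = r * E s)
  (hright : ∀ (s : S) (r : R), E (s * φ r) = E s * r)

noncomputable def wHom (N : ModuleCat.{u} R) :
    N ⟶ (ModuleCat.restrictScalars φ).obj ((ModuleCat.coextendScalars φ).obj N) :=
  ModuleCat.ofHom (Y := (ModuleCat.restrictScalars φ).obj ((ModuleCat.coextendScalars φ).obj N))
  { toFun := fun n =>
      { toFun := fun s => E s • n
        map_add' := fun s t => by
          have h : ∀ a b : S, E (a + b) • n = E a • n + E b • n := fun a b => by
            rw [map_add, add_smul]
          exact h s t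
        map_smul' := fun r s => by
          have h : ∀ a : S, E (φ r * a) • n = r • (E a • n) := fun a => by
            rw [hleft, mul_smul]
          exact h s }
    map_add' := fun n1 n2 => LinearMap.ext fun s => smul_add (E s) n1 n2
    map_smul' := fun r n => LinearMap.ext fun s => by
      have h : ∀ a : S, E a • (r • n) = E (a * φ r) • n := fun a => by
        rw [hright, mul_smul]
      exact h s }

noncomputable def tHom (N : ModuleCat.{u} R) :
    F.obj N ⟶ (ModuleCat.coextendScalars φ).obj N :=
  (adj.homEquiv N ((ModuleCat.coextendScalars φ).obj N)).symm (wHom φ E hleft hright N)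

noncomputable def nuHom (N : ModuleCat.{u} R) :
    (ModuleCat.restrictScalars φ).obj (F.obj N) ⟶ N :=
  ModuleCat.RestrictionCoextensionAdj.HomEquiv.toRestriction φ (tHom φ F adj E hleft hright N)

lemma t_unit (N : ModuleCat.{u} R) (n : N) :
    tHom φ F adj E hleft hright N (adj.unit.app N n) = wHom φ E hleft hright N n := by
  have h : adj.homEquiv N _ (tHom φ F adj E hleft hright N) = wHom φ E hleft hright N :=
    (adj.homEquiv _ _).apply_symm_apply _
  rw [Adjunction.homEquiv_unit] at h
  have h2 := ConcreteCategory.congr_hom h n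
  rw [ModuleCat.comp_apply] at h2
  exact h2

lemma nu_unit (N : ModuleCat.{u} R) (n : N) :
    nuHom φ F adj E hleft hright N (adj.unit.app N n) = E 1 • n := by
  show tHom φ F adj E hleft hright N (adj.unit.app N n) (1 : S) = E 1 • n
  rw [t_unit]
  rfl

lemma nu_natural {Y Y' : ModuleCat.{u} R} (g : Y ⟶ Y') :
    (ModuleCat.restrictScalars φ).map (F.map g) ≫ nuHom φ F adj E hleft hright Y'
      = nuHom φ F adj E hleft hright Y ≫ g := by
  have ht : F.map g ≫ tHom φ F adj E hleft hright Y'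
      = tHom φ F adj E hleft hright Y ≫ (ModuleCat.coextendScalars φ).map g := by
    apply (adj.homEquiv Y ((ModuleCat.coextendScalars φ).obj Y')).injective
    rw [Adjunction.homEquiv_naturality_left, Adjunction.homEquiv_naturality_right]
    have h1 : adj.homEquiv Y' _ (tHom φ F adj E hleft hright Y') = wHom φ E hleft hright Y' :=
      (adj.homEquiv _ _).apply_symm_apply _
    have h2 : adj.homEquiv Y _ (tHom φ F adj E hleft hright Y) = wHom φ E hleft hright Y :=
      (adj.homEquiv _ _).apply_symm_apply _
    rw [h1, h2]
    apply ModuleCat.hom_ext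
    apply LinearMap.ext; intro n
    apply LinearMap.ext; intro s
    show E s • g n = g (E s • n)
    rw [map_smul]
  ext x
  show nuHom φ F adj E hleft hright Y' (F.map g x) = g (nuHom φ F adj E hleft hright Y x)
  have h3 := ConcreteCategory.congr_hom ht x
  change tHom φ F adj E hleft hright Y' (F.map g x)
      = (ModuleCat.coextendScalars φ).map g (tHom φ F adj E hleft hright Y x) at h3
  show tHom φ F adj E hleft hright Y' (F.map g x) (1 : S)
      = g (tHom φ F adj E hleft hright Y x (1 : S))
  rw [h3]
  rfl

def sigmaHom (N : ModuleCat.{u} R) : N ⟶ N :=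
  ModuleCat.ofHom
  { toFun := fun n => E 1 • n
    map_add' := fun a b => smul_add (E 1) a b
    map_smul' := fun r n => by
      have hc : E 1 * r = r * E 1 := by
        have h1 := hright 1 r
        have h2 := hleft r 1
        rw [one_mul] at h1
        rw [mul_one] at h2
        rw [← h1, ← h2]
      have h : E 1 • (r • n) = r • (E 1 • n) := by
        rw [← mul_smul, ← mul_smul, hc]
      exact h }

lemma unit_nu (N : ModuleCat.{u} R) :
    adj.unit.app N ≫ nuHom φ F adj E hleft hright N = sigmaHom φ E hleft hright N := by
  ext n
  show nuHom φ F adj E hleft hright N (adj.unit.app N n) = E 1 • n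
  rw [nu_unit]

include adj in
lemma F_sigma (hone : φ (E 1) = 1) (N : ModuleCat.{u} R) :
    F.map (sigmaHom φ E hleft hright N) = 𝟙 (F.obj N) := by
  apply (adj.homEquiv N (F.obj N)).injective
  rw [show F.map (sigmaHom φ E hleft hright N)
      = F.map (sigmaHom φ E hleft hright N) ≫ 𝟙 (F.obj N) from (Category.comp_id _).symm,
    Adjunction.homEquiv_naturality_left, Adjunction.homEquiv_unit,
    CategoryTheory.Functor.map_id]
  ext n
  show adj.unit.app N (E 1 • n) = adj.unit.app N n
  rw [map_smul]
  have h2 : ∀ m : ((ModuleCat.restrictScalars φ).obj (F.obj N) : Type u),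
      (φ (E 1) : S) • m = m := fun m => by rw [hone, one_smul]
  exact h2 _

include adj hleft hright in
lemma backward (hone : φ (E 1) = 1) : SemiseparableFunctor F := by
  refine ⟨fun M N h => adj.unit.app M ≫ (ModuleCat.restrictScalars φ).map h
    ≫ nuHom φ F adj E hleft hright N, ?_, ?_⟩
  · intro M M' N N' f g h
    dsimp only
    rw [CategoryTheory.Functor.map_comp, CategoryTheory.Functor.map_comp]
    have hu : adj.unit.app M' ≫ (ModuleCat.restrictScalars φ).map (F.map f)
        = f ≫ adj.unit.app M := by
      have := adj.unit.naturality f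
      simpa using this.symm
    rw [Category.assoc, ← Category.assoc (adj.unit.app M'), hu]
    rw [Category.assoc, Category.assoc, nu_natural]
    simp only [Category.assoc]
  · intro M N f
    dsimp only
    have hu : adj.unit.app M ≫ (ModuleCat.restrictScalars φ).map (F.map f)
        = f ≫ adj.unit.app N := by
      have := adj.unit.naturality f
      simpa using this.symm
    rw [← Category.assoc, hu, Category.assoc, unit_nu, CategoryTheory.Functor.map_comp,
      F_sigma φ F adj E hleft hright hone, Category.comp_id]

end Backward

end Aux

theorem stmt18 {R S : Type u} [Ring R] [Ring S] (φ : R →+* S)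
    (F : ModuleCat.{u} R ⥤ ModuleCat.{u} S)
    (adj : F ⊣ ModuleCat.restrictScalars φ) :
    (SemiseparableFunctor F ↔
      ∃ E : S →+ R,
        (∀ (r : R) (s : S), E (φ r * s) = r * E s) ∧
        (∀ (s : S) (r : R), E (s * φ r) = E s * r) ∧
        (∀ r : R, φ (E (φ r)) = φ r)) ∧
    (SemiseparableFunctor F ↔
      ∃ E : S →+ R,
        (∀ (r : R) (s : S), E (φ r * s) = r * E s) ∧
        (∀ (s : S) (r : R), E (s * φ r) = E s * r) ∧
        φ (E 1) = 1) := by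
  have hiff2 : SemiseparableFunctor F ↔
      ∃ E : S →+ R,
        (∀ (r : R) (s : S), E (φ r * s) = r * E s) ∧
        (∀ (s : S) (r : R), E (s * φ r) = E s * r) ∧
        φ (E 1) = 1 := by
    constructor
    · exact forward φ F adj
    · rintro ⟨E, h1, h2, h3⟩
      exact backward φ F adj E h1 h2 h3
  constructor
  · rw [hiff2]
    constructor
    · rintro ⟨E, h1, h2, h3⟩
      refine ⟨E, h1, h2, fun r => ?_⟩
      have h4 := h1 r 1
      rw [mul_one] at h4
      rw [h4, map_mul, h3, mul_one]
    · rintro ⟨E, h1, h2, h3⟩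
      refine ⟨E, h1, h2, ?_⟩
      have h4 := h3 1
      rw [map_one φ] at h4
      exact h4
  · exact hiff2
end

section
/- Let φ : R → S be a ring homomorphism. Then the extension of scalars functor S ⊗_R (-) : R-Mod → S-Mod is semiseparable if and only if there exists a (unique) central idempotent z ∈ R such that φ(z) = 1_S and the restricted ring map φ|_{Rz} : Rz → S is a split monomorphism of Rz-bimodules. -/
open CategoryTheory

universe v₁ v₂ v₃ u₁ u₂ u₃ u v

namespace Stmt19Aux
variable {R S : Type u} [Ring R] [Ring S] (φ : R →+* S)
  {F : ModuleCat.{u} R ⥤ ModuleCat.{u} S} (adj : F ⊣ ModuleCat.restrictScalars φ)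

lemma fhom_ext {X : ModuleCat.{u} R} {N : ModuleCat.{u} S} {g₁ g₂ : F.obj X ⟶ N}
    (h : ∀ x : X, g₁ (adj.unit.app X x) = g₂ (adj.unit.app X x)) : g₁ = g₂ := by
  apply (adj.homEquiv X N).injective
  rw [Adjunction.homEquiv_unit, Adjunction.homEquiv_unit]
  ext x
  exact h x

lemma unit_nat {X Y : ModuleCat.{u} R} (f : X ⟶ Y) (x : X) :
    (F.map f) (adj.unit.app X x) = adj.unit.app Y (f x) := by
  have := adj.unit.naturality f
  have h2 := congrArg (fun (g : X ⟶ (ModuleCat.restrictScalars φ).obj (F.obj Y)) => g x) this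
  simp only [Functor.id_obj, Functor.comp_obj, Functor.id_map, CategoryTheory.comp_apply,
    Function.comp_apply, Functor.comp_map, ModuleCat.restrictScalars.map_apply] at h2
  exact h2.symm

lemma homEquiv_apply {X : ModuleCat.{u} R} {N : ModuleCat.{u} S} (g : F.obj X ⟶ N) (x : X) :
    (adj.homEquiv X N g) x = g (adj.unit.app X x) := by
  rw [Adjunction.homEquiv_unit]
  rfl

/-- right multiplication as an `R`-linear endomorphism of `R`. -/
def rmul (r : R) : ModuleCat.of R R ⟶ ModuleCat.of R R :=
  ModuleCat.ofHom (LinearMap.toSpanSingleton R R r)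

lemma rmul_apply (r x : R) : rmul (R := R) r x = x * r :=
  smul_eq_mul x r


include adj in
lemma exists_E (hss : SemiseparableFunctor F) :
    ∃ E : S →+ R, (∀ (r : R) (s : S), E (φ r * s) = r * E s) ∧
      (∀ (s : S) (r : R), E (s * φ r) = E s * r) ∧ φ (E 1) = 1 := by
  obtain ⟨P, hnat, hsemi⟩ := hss
  let RR : ModuleCat.{u} R := ModuleCat.of R R
  let G := ModuleCat.restrictScalars.{u} φ
  let M : ModuleCat.{u} S := F.obj RR
  let u₀ : G.obj M := adj.unit.app RR (1 : R)
  let ν : G.obj M ⟶ RR := P (G.obj M) RR (adj.counit.app M)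
  let ν₀ : G.obj M → R := fun m => ν m
  let E₀ : S → R := fun s => ν₀ (s • u₀)
  have hν_smul : ∀ (r : R) (m : G.obj M), ν₀ ((φ r • m : M)) = r * ν₀ m := by
    intro r m
    exact map_smul ν.hom r m
  have hE_add : ∀ s t : S, E₀ (s + t) = E₀ s + E₀ t := by
    intro s t
    show ν ((s + t) • u₀) = (ν (s • u₀) : R) + (ν (t • u₀) : R)
    rw [add_smul, map_add]
  have hl : ∀ (r : R) (s : S), E₀ (φ r * s) = r * E₀ s := by
    intro r s
    have h1 : ((φ r * s) • u₀ : G.obj M) = ((φ r • (s • u₀ : G.obj M) : M) : G.obj M) :=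
      mul_smul (φ r) s u₀
    show ν₀ ((φ r * s) • u₀) = r * ν₀ (s • u₀)
    rw [h1, hν_smul r (s • u₀)]
  have hν_nat : ∀ (g : RR ⟶ RR), G.map (F.map g) ≫ ν = ν ≫ g := by
    intro g
    have h1 := hnat (G.map (F.map g)) (𝟙 RR) (adj.counit.app M)
    have h2 := hnat (𝟙 (G.obj M)) g (adj.counit.app M)
    have h3 : F.map (G.map (F.map g)) ≫ adj.counit.app M = adj.counit.app M ≫ F.map g :=
      adj.counit.naturality (F.map g)
    simp only [CategoryTheory.Functor.map_id, Category.comp_id, Category.id_comp] at h1 h2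
    rw [h3] at h1
    rw [h1] at h2
    exact h2
  have hν_nat' : ∀ (g : RR ⟶ RR) (m : G.obj M), ν₀ ((F.map g) m) = g (ν₀ m) := by
    intro g m
    have := congrArg (fun (k : G.obj M ⟶ RR) => k m) (hν_nat g)
    exact this
  have hu : ∀ r : R, (φ r • u₀ : M) = (F.map (rmul r)) u₀ := by
    intro r
    have h4 : ((r • u₀ : G.obj M) : M) = adj.unit.app RR ((r * 1 : R)) := by
      have := map_smul (adj.unit.app RR).hom r ((1 : R) : RR)
      rw [smul_eq_mul] at this
      exact this.symm
    have h1 : (F.map (rmul r)) (adj.unit.app RR ((1 : R))) = adj.unit.app RR (rmul r ((1 : R))) :=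
      unit_nat φ adj (rmul r) ((1 : R))
    have h2 : rmul (R := R) r ((1 : R)) = (r * 1 : R) := by
      rw [rmul_apply, one_mul, mul_one]
    have h3 : (φ r • u₀ : M) = ((r • u₀ : G.obj M) : M) := rfl
    rw [h3, h4, ← h2, ← h1]
  have hr : ∀ (s : S) (r : R), E₀ (s * φ r) = E₀ s * r := by
    intro s r
    have h1 : ((s * φ r) • u₀ : G.obj M) = ((s • ((φ r • u₀ : M)) : M) : G.obj M) :=
      mul_smul s (φ r) (u₀ : M)
    have h5 : (s • ((F.map (rmul r)) u₀) : M) = (F.map (rmul r)) ((s • u₀ : G.obj M) : M) :=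
      (map_smul (F.map (rmul r)).hom s (u₀ : M)).symm
    show ν₀ ((s * φ r) • u₀) = ν₀ (s • u₀) * r
    rw [h1, hu r]
    erw [h5]
    have h6 := hν_nat' (rmul r) (s • u₀)
    rw [h6, rmul_apply]
  have hφE : φ (E₀ 1) = 1 := by
    let w : RR ⟶ RR := adj.unit.app RR ≫ ν
    have hw : P RR RR (𝟙 M) = w := by
      have h1 := hnat (adj.unit.app RR) (𝟙 RR) (adj.counit.app M)
      have h2 : F.map (adj.unit.app RR) ≫ adj.counit.app M = 𝟙 M :=
        adj.left_triangle_components RR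
      simp only [CategoryTheory.Functor.map_id, Category.comp_id, Category.id_comp] at h1
      rw [h2] at h1
      exact h1
    have hFw : F.map w = 𝟙 M := by
      have := hsemi (𝟙 RR)
      simp only [CategoryTheory.Functor.map_id] at this
      rw [hw] at this
      exact this
    have hz : adj.unit.app RR (w ((1 : R))) = u₀ := by
      have h1 : (F.map w) (adj.unit.app RR ((1 : R))) = adj.unit.app RR (w ((1 : R))) :=
        unit_nat φ adj w ((1 : R))
      rw [hFw] at h1
      exact h1.symm
    have hw1 : (w ((1 : R)) : R) = E₀ 1 := by
      show (ν (adj.unit.app RR ((1 : R))) : R) = ν₀ ((1 : S) • u₀)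
      rw [one_smul]
    let lm : R →ₗ[R] (ModuleCat.restrictScalars φ).obj (ModuleCat.of S S) :=
      { toFun := fun r => (φ r : S)
        map_add' := fun a b => φ.map_add a b
        map_smul' := fun r x => by
          show φ (r * x) = φ r * φ x
          exact φ.map_mul r x }
    let h0 : RR ⟶ G.obj (ModuleCat.of S S) := ModuleCat.ofHom (Y := ↑(G.obj (ModuleCat.of S S))) lm
    let hh : M ⟶ ModuleCat.of S S := (adj.homEquiv RR (ModuleCat.of S S)).symm h0
    have heval : ∀ x : R, (hh (adj.unit.app RR x) : S) = φ x := by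
      intro x
      have h1 : (adj.homEquiv RR (ModuleCat.of S S)) hh = h0 :=
        (adj.homEquiv RR (ModuleCat.of S S)).apply_symm_apply h0
      have h2 := homEquiv_apply φ adj hh x
      rw [h1] at h2
      exact h2.symm
    have e1 : (hh u₀ : S) = (1 : S) := by
      have := heval (1 : R)
      rw [φ.map_one] at this
      exact this
    have e2 : φ (E₀ 1) = hh (adj.unit.app RR (E₀ 1)) := (heval (E₀ 1)).symm
    rw [e2, ← hw1, hz, e1]
  exact ⟨AddMonoidHom.mk' E₀ hE_add, hl, hr, hφE⟩


include adj in
lemma semisep_of_E (E : S →+ R) (hl : ∀ (r : R) (s : S), E (φ r * s) = r * E s)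
    (hr : ∀ (s : S) (r : R), E (s * φ r) = E s * r) (hφ : φ (E 1) = 1) :
    SemiseparableFunctor F := by
  let G := ModuleCat.restrictScalars.{u} φ
  let H := ModuleCat.coextendScalars.{u} φ
  let RS : ModuleCat.{u} R := (ModuleCat.restrictScalars φ).obj (ModuleCat.of S S)
  let oneS : RS := (1 : S)
  -- the R-linear map Y → (S →ₗ[R] Y), y ↦ (s ↦ E s • y)
  let lm : ∀ (Y : ModuleCat.{u} R), Y → (RS →ₗ[R] Y) := fun Y y =>
    { toFun := fun s => E (show S from s) • y
      map_add' := fun a b => by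
        show E ((show S from a) + (show S from b)) • y = _ • y + _ • y
        rw [map_add, add_smul]
      map_smul' := fun r x => by
        show E (φ r * (show S from x)) • y = r • (E (show S from x) • y)
        rw [hl, mul_smul] }
  have lm_apply : ∀ (Y : ModuleCat.{u} R) (y : Y) (s : S), lm Y y s = E s • y := fun _ _ _ => rfl
  let ωb : ∀ (Y : ModuleCat.{u} R), Y ⟶ G.obj (H.obj Y) := fun Y => ModuleCat.ofHom (X := ↑Y) (Y := ↑(G.obj (H.obj Y)))
    { toFun := fun y => (show ↑(G.obj (H.obj Y)) from lm Y y)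
      map_add' := fun y y' => by
        show (lm Y (y + y') : RS →ₗ[R] Y) = lm Y y + lm Y y'
        apply LinearMap.ext
        intro s
        show E (show S from s) • (y + y') = lm Y y s + lm Y y' s
        exact smul_add _ _ _
      map_smul' := fun r y => by
        show (lm Y (r • y) : RS →ₗ[R] Y) = ((φ r : S) • (show ↑(H.obj Y) from lm Y y) : ↑(H.obj Y))
        apply LinearMap.ext
        intro x
        have h1 : ((φ r : S) • (show ↑(H.obj Y) from lm Y y) : ↑(H.obj Y)) (show S from x)
            = lm Y y ((show S from x) * φ r) :=
          ModuleCat.CoextendScalars.smul_apply φ Y (lm Y y) (φ r) (show S from x)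
        show E (show S from x) • (r • y) = ((φ r : S) • (show ↑(H.obj Y) from lm Y y) : ↑(H.obj Y)) (show S from x)
        rw [h1, lm_apply, hr, mul_smul] }
  have ωb_apply : ∀ (Y : ModuleCat.{u} R) (y : Y) (s : S),
      (show (H.obj Y) from ωb Y y) s = E s • y := fun _ _ _ => rfl
  let ω : ∀ (Y : ModuleCat.{u} R), F.obj Y ⟶ H.obj Y := fun Y =>
    (adj.homEquiv Y (H.obj Y)).symm (ωb Y)
  have hω : ∀ (Y : ModuleCat.{u} R) (y : Y), ω Y (adj.unit.app Y y) = ωb Y y := by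
    intro Y y
    have h1 : (adj.homEquiv Y (H.obj Y)) (ω Y) = ωb Y :=
      (adj.homEquiv Y (H.obj Y)).apply_symm_apply (ωb Y)
    have h2 := homEquiv_apply φ adj (ω Y) y
    rw [h1] at h2
    exact h2.symm
  -- the retraction ν
  let ν : ∀ (Y : ModuleCat.{u} R), G.obj (F.obj Y) ⟶ Y := fun Y => ModuleCat.ofHom (X := ↑(G.obj (F.obj Y))) (Y := ↑Y)
    { toFun := fun m => (show (H.obj Y) from ω Y m) (1 : S)
      map_add' := fun m m' => by
        have h1 : ω Y (m + m') = ω Y m + ω Y m' := map_add (ω Y).hom m m'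
        show (show (H.obj Y) from ω Y (m + m')) (1 : S) = _
        rw [h1]
        rfl
      map_smul' := fun r m => by
        have h1 : ω Y ((φ r • m : F.obj Y)) = ((φ r : S) • (ω Y m) : (H.obj Y)) :=
          map_smul (ω Y).hom (φ r) m
        have h2 : ((φ r : S) • (ω Y m) : (H.obj Y)) (1 : S)
            = (show (H.obj Y) from ω Y m) ((1 : S) * φ r) :=
          ModuleCat.CoextendScalars.smul_apply φ Y (ω Y m) (φ r) (1 : S)
        have h3 : (show RS →ₗ[R] Y from (show (H.obj Y) from ω Y m)) (r • oneS)
            = r • ((show RS →ₗ[R] Y from (show (H.obj Y) from ω Y m)) oneS) :=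
          map_smul _ r oneS
        have h4 : (r • oneS : RS) = ((1 : S) * φ r : S) := by
          show (φ r * 1 : S) = (1 : S) * φ r
          rw [mul_one, one_mul]
        show (show (H.obj Y) from ω Y ((r • m : G.obj (F.obj Y)))) (1 : S)
            = r • ((show (H.obj Y) from ω Y m) (1 : S))
        rw [show (ω Y ((r • m : G.obj (F.obj Y)))) = ω Y ((φ r • m : F.obj Y)) from rfl, h1]
        rw [h2, ← h4]
        exact h3 }
  have hν_apply : ∀ (Y : ModuleCat.{u} R) (m : G.obj (F.obj Y)),
      ν Y m = (show (H.obj Y) from ω Y m) (1 : S) := fun _ _ => rfl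
  have hνη : ∀ (Y : ModuleCat.{u} R) (y : Y), ν Y (adj.unit.app Y y) = E 1 • y := by
    intro Y y
    rw [hν_apply, hω, ωb_apply]
  -- naturality of ν
  have hνnat : ∀ {Y Y' : ModuleCat.{u} R} (g : Y ⟶ Y'),
      G.map (F.map g) ≫ ν Y' = ν Y ≫ g := by
    intro Y Y' g
    have hcomm : F.map g ≫ ω Y' = ω Y ≫ H.map g := by
      apply fhom_ext φ adj
      intro y
      have e1 : (F.map g ≫ ω Y') (adj.unit.app Y y) = ω Y' (F.map g (adj.unit.app Y y)) := rfl
      have e2 : (F.map g) (adj.unit.app Y y) = adj.unit.app Y' (g y) := unit_nat φ adj g y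
      have e3 : (ω Y ≫ H.map g) (adj.unit.app Y y) = (H.map g) (ω Y (adj.unit.app Y y)) := rfl
      rw [e1, e2, hω, e3, hω]
      apply LinearMap.ext
      intro x
      have e4 : (show (H.obj Y') from (H.map g) (ωb Y y)) (show S from x)
          = g ((show (H.obj Y) from ωb Y y) (show S from x)) :=
        ModuleCat.CoextendScalars.map_apply φ g (ωb Y y) (show S from x)
      show (show (H.obj Y') from ωb Y' (g y)) (show S from x)
          = (show (H.obj Y') from (H.map g) (ωb Y y)) (show S from x)
      rw [e4, ωb_apply, ωb_apply, map_smul]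
    apply ModuleCat.hom_ext
    apply LinearMap.ext
    intro m
    have c1 := congrArg (fun (k : F.obj Y ⟶ H.obj Y') => k m) hcomm
    simp only [CategoryTheory.comp_apply, Function.comp_apply] at c1
    show ν Y' ((F.map g) m) = g (ν Y m)
    refine (congrArg (fun t => (show (H.obj Y') from t) (1 : S)) c1).trans ?_
    exact ModuleCat.CoextendScalars.map_apply φ g (ω Y m) (1 : S)
  -- assemble
  refine ⟨fun X Y h => (adj.homEquiv X (F.obj Y)) h ≫ ν Y, ?_, ?_⟩
  · intro X X' Y Y' f g h
    show (adj.homEquiv X' (F.obj Y')) (F.map f ≫ h ≫ F.map g) ≫ ν Y'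
        = f ≫ ((adj.homEquiv X (F.obj Y)) h ≫ ν Y) ≫ g
    rw [Adjunction.homEquiv_naturality_left, Adjunction.homEquiv_naturality_right]
    simp only [Category.assoc]
    rw [hνnat g]
  · intro X Y f
    show F.map ((adj.homEquiv X (F.obj Y)) (F.map f) ≫ ν Y) = F.map f
    have h1 : (adj.homEquiv X (F.obj Y)) (F.map f) = f ≫ adj.unit.app Y := by
      rw [← Category.comp_id (F.map f), Adjunction.homEquiv_naturality_left,
        Adjunction.homEquiv_id]
    have h2 : F.map (adj.unit.app Y ≫ ν Y) = 𝟙 (F.obj Y) := by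
      apply fhom_ext φ adj
      intro y
      show (F.map (adj.unit.app Y ≫ ν Y)) (adj.unit.app Y y) = (𝟙 (F.obj Y)) (adj.unit.app Y y)
      have e1 : (F.map (adj.unit.app Y ≫ ν Y)) (adj.unit.app Y y)
          = adj.unit.app Y ((adj.unit.app Y ≫ ν Y) y) := unit_nat φ adj _ y
      rw [e1]
      show adj.unit.app Y (ν Y (adj.unit.app Y y)) = (𝟙 (F.obj Y)) (adj.unit.app Y y)
      rw [hνη]
      have e2 : adj.unit.app Y ((E 1 : R) • y)
          = ((E 1 : R) • (adj.unit.app Y y) : G.obj (F.obj Y)) := map_smul _ _ _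
      rw [e2]
      show (φ (E 1) • (show ↑(F.obj Y) from adj.unit.app Y y) : ↑(F.obj Y)) = _
      rw [hφ, one_smul]
      rfl
    rw [h1, Category.assoc, F.map_comp, h2, Category.comp_id]

end Stmt19Aux


theorem stmt19 {R S : Type u} [Ring R] [Ring S] (φ : R →+* S)
    (F : ModuleCat.{u} R ⥤ ModuleCat.{u} S)
    (adj : F ⊣ ModuleCat.restrictScalars φ) :
    SemiseparableFunctor F ↔
      ∃! z : R, IsIdempotentElem z ∧ (∀ r : R, r * z = z * r) ∧ φ z = 1 ∧
        -- the ring map τ = φ|_{Rz} : Rz → S is a split monomorphism of Rz-bimodules,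
        -- via an Rz-bimodule retraction π : S → Rz (valued in R, with image in Rz)
        ∃ π : S →+ R,
          (∀ s : S, π s * z = π s) ∧
          (∀ (r : R) (s : S), π (φ (r * z) * s) = r * z * π s) ∧
          (∀ (s : S) (r : R), π (s * φ (r * z)) = π s * (r * z)) ∧
          (∀ r : R, π (φ (r * z)) = r * z) := by
  constructor
  · intro hss
    obtain ⟨E, hl, hr, hφ⟩ := Stmt19Aux.exists_E φ adj hss
    set z := E 1 with hz
    have hφz : φ z = 1 := hφ
    have heφ : ∀ r : R, E (φ r) = r * z := by
      intro r
      have := hl r 1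
      rwa [mul_one] at this
    have heφ' : ∀ r : R, E (φ r) = z * r := by
      intro r
      have := hr 1 r
      rwa [one_mul] at this
    have hcomm : ∀ r : R, r * z = z * r := fun r => (heφ r).symm.trans (heφ' r)
    have hidem : z * z = z := by
      have h1 := heφ z
      rw [hφz] at h1
      exact h1.symm
    have p1 : ∀ s : S, E s * z = E s := by
      intro s
      have := hr s z
      rw [hφz, mul_one] at this
      exact this.symm
    have p4 : ∀ r : R, E (φ (r * z)) = r * z := by
      intro r
      rw [heφ (r * z), mul_assoc, hidem]
    refine ⟨z, ⟨hidem, hcomm, hφz, E, p1, fun r s => hl (r * z) s,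
      fun s r => hr s (r * z), p4⟩, ?_⟩
    rintro z' ⟨hid', hcom', hφz', π', q1, q2, q3, q4⟩
    have a1 : z * z' = z' := by
      have e1 := q4 z
      have e2 := q4 1
      have e3 : φ (z * z') = φ (1 * z') := by
        rw [map_mul, map_mul, hφz, hφz', map_one]
      rw [e3] at e1
      rw [e2] at e1
      rw [one_mul] at e1
      exact e1.symm
    have a2 : z' * z = z := by
      have e1 := p4 z'
      have e2 := p4 1
      have e3 : φ (z' * z) = φ (1 * z) := by
        rw [map_mul, map_mul, hφz, hφz', map_one]
      rw [e3] at e1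
      rw [e2] at e1
      rw [one_mul] at e1
      exact e1.symm
    calc z' = z * z' := a1.symm
      _ = z' * z := (hcomm z').symm
      _ = z := a2
  · rintro ⟨z, ⟨hid, hcom, hφz, π, q1, q2, q3, q4⟩, -⟩
    have hπz : ∀ s : S, z * π s = π s := fun s => (hcom (π s)).symm.trans (q1 s)
    have hl : ∀ (r : R) (s : S), π (φ r * s) = r * π s := by
      intro r s
      have hφr : φ r = φ (r * z) := by rw [map_mul, hφz, mul_one]
      rw [hφr, q2, mul_assoc, hπz]
    have hr' : ∀ (s : S) (r : R), π (s * φ r) = π s * r := by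
      intro s r
      have hφr : φ r = φ (r * z) := by rw [map_mul, hφz, mul_one]
      rw [hφr, q3, hcom, ← mul_assoc, q1]
    have hφ1 : φ (π 1) = 1 := by
      have e : π 1 = z := by
        have e := q4 1
        rw [one_mul] at e
        rw [hφz] at e
        exact e
      rw [e, hφz]
    exact Stmt19Aux.semisep_of_E φ adj π hl hr' hφ1
end
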